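/- arXiv:1601.05825 — 8 statements merged into one kernel-verified Lean document; each statement's English description precedes it below -/
import Mathlib

section
/- Every Banach space with the Schur property has property (K). -/
open NormedSpace Filter

/-- A set is weakly compact if it is compact in the weak topology. -/
def IsWeaklyCompact {X : Type*} [NormedAddCommGroup X] [NormedSpace ℝ X] (L : Set X) : Prop :=
  IsCompact (toWeakSpace ℝ X '' L)

/-- Weak* convergence of a sequence of functionals. -/
def WStarTendsto {X : Type*} [NormedAddCommGroup X] [NormedSpace ℝ X]
    (f : ℕ → StrongDual ℝ X) (g : StrongDual ℝ X) : Prop :=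
  ∀ x : X, Tendsto (fun n => f n x) atTop (nhds (g x))

/-- Convergence in the Mackey topology μ(X*,X): uniform convergence on every
weakly compact subset of X. -/
def MackeyTendsto {X : Type*} [NormedAddCommGroup X] [NormedSpace ℝ X]
    (f : ℕ → StrongDual ℝ X) (g : StrongDual ℝ X) : Prop :=
  ∀ L : Set X, IsWeaklyCompact L → ∀ ε : ℝ, 0 < ε →
    ∀ᶠ n in atTop, ∀ x ∈ L, |f n x - g x| < ε

/-- `y` is a convex block subsequence of `x`. -/
def IsConvexBlock {E : Type*} [AddCommGroup E] [Module ℝ E] (x y : ℕ → E) : Prop :=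
  ∃ (I : ℕ → Finset ℕ) (a : ℕ → ℝ),
    (∀ k, (I k).Nonempty) ∧
    (∀ k m m', m ∈ I k → m' ∈ I (k + 1) → m < m') ∧
    (∀ n, 0 ≤ a n) ∧
    (∀ k, ∑ n ∈ I k, a n = 1) ∧
    (∀ k, y k = ∑ n ∈ I k, a n • x n)

/-- Property (K): every weak*-convergent sequence in the dual admits a convex block
subsequence converging in the Mackey topology. -/
def PropertyK (X : Type*) [NormedAddCommGroup X] [NormedSpace ℝ X] : Prop :=
  ∀ (f : ℕ → StrongDual ℝ X) (g : StrongDual ℝ X), WStarTendsto f g →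
    ∃ (y : ℕ → StrongDual ℝ X) (h : StrongDual ℝ X), IsConvexBlock f y ∧ MackeyTendsto y h

/-- The Schur property: weakly convergent sequences are norm convergent. -/
def SchurProperty (X : Type*) [NormedAddCommGroup X] [NormedSpace ℝ X] : Prop :=
  ∀ (x : ℕ → X) (x0 : X),
    (∀ f : StrongDual ℝ X, Tendsto (fun n => f (x n)) atTop (nhds (f x0))) →
    Tendsto x atTop (nhds x0)

section Aux
open Topology Set
variable {X : Type*} [NormedAddCommGroup X] [NormedSpace ℝ X]


theorem weakT2 : T2Space (WeakSpace ℝ X) := by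
  constructor
  intro u v huv
  obtain ⟨f, -, hf⟩ := exists_dual_vector ℝ ((toWeakSpace ℝ X).symm u - (toWeakSpace ℝ X).symm v)
    (norm_ne_zero_iff.mpr (sub_ne_zero.2 (fun h => huv ((toWeakSpace ℝ X).symm.injective h))))
  refine separated_by_continuous (WeakBilin.eval_continuous _ f)
    (f := fun w : WeakSpace ℝ X => f ((toWeakSpace ℝ X).symm w)) ?_
  intro h
  simp only [map_sub] at hf
  rw [show f ((toWeakSpace ℝ X).symm u) = f ((toWeakSpace ℝ X).symm v) from h, sub_self] at hf
  exact huv ((toWeakSpace ℝ X).symm.injective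
    (sub_eq_zero.mp (norm_eq_zero.mp (by exact_mod_cast hf.symm))))

theorem weak_seq_subseq {L : Set X} (hL : IsWeaklyCompact L) (x : ℕ → X) (hx : ∀ n, x n ∈ L) :
    ∃ x0 ∈ L, ∃ φ : ℕ → ℕ, StrictMono φ ∧
      ∀ f : StrongDual ℝ X, Tendsto (fun j => f (x (φ j))) atTop (𝓝 (f x0)) := by
  haveI : T2Space (WeakSpace ℝ X) := weakT2
  set e := toWeakSpace ℝ X with he
  set Y := (Submodule.span ℝ (Set.range x)).topologicalClosure with hY
  have hYc : IsClosed (Y : Set X) := Submodule.isClosed_topologicalClosure _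
  have hxY : Set.range x ⊆ (Y : Set X) := fun a ha =>
    (Submodule.le_topologicalClosure _) (Submodule.subset_span ha)
  have hYsep : TopologicalSpace.IsSeparable (Y : Set X) := by
    have h1 := ((Set.countable_range x).isSeparable.span (R := ℝ)).closure
    rw [hY]
    rw [show ((Submodule.span ℝ (Set.range x)).topologicalClosure : Set X)
      = closure (Submodule.span ℝ (Set.range x) : Set X) from rfl]
    exact h1
  obtain ⟨c, hc_count, hc_sub⟩ := hYsep
  have hc_ne : c.Nonempty := by
    rcases c.eq_empty_or_nonempty with h | h
    · exfalso
      have : (0 : X) ∈ closure c := hc_sub (Submodule.zero_mem Y)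
      rw [h] at this; simpa using this
    · exact h
  obtain ⟨d, rfl⟩ := hc_count.exists_eq_range hc_ne
  choose g hg1 hg2 using fun i => exists_dual_vector'' ℝ (d i)
  -- separation on Y
  have hsep : ∀ y ∈ (Y : Set X), (∀ i, g i y = 0) → y = 0 := by
    intro y hy hzero
    by_contra hy0
    have hypos : 0 < ‖y‖ := norm_pos_iff.2 hy0
    obtain ⟨b, ⟨i, rfl⟩, hb⟩ := Metric.mem_closure_iff.mp (hc_sub hy) (‖y‖/3) (by linarith)
    rw [dist_eq_norm] at hb
    have h1 : ‖y‖ - ‖d i‖ ≤ ‖y - d i‖ := norm_sub_norm_le y (d i)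
    have h4 : g i (d i - y) = ‖d i‖ := by
      rw [map_sub, hzero i, sub_zero]; exact_mod_cast hg2 i
    have h3 : ‖d i‖ ≤ ‖y - d i‖ :=
      calc ‖d i‖ = g i (d i - y) := h4.symm
        _ ≤ |g i (d i - y)| := le_abs_self _
        _ ≤ ‖g i‖ * ‖d i - y‖ := (g i).le_opNorm (d i - y)
        _ ≤ 1 * ‖d i - y‖ := mul_le_mul_of_nonneg_right (hg1 i) (norm_nonneg _)
        _ = ‖y - d i‖ := by rw [one_mul, norm_sub_rev]
    linarith
  -- Y is weakly closed
  have hYw : IsClosed (e '' (Y : Set X)) := by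
    have hconv : Convex ℝ (Y : Set X) := Y.convex
    have := hconv.toWeakSpace_closure (𝕜 := ℝ)
    rw [hYc.closure_eq] at this
    rw [he, this]
    exact isClosed_closure
  have hLK : IsClosed (e '' L) := hL.isClosed
  set K := closure (e '' Set.range x) with hK
  have hKL : K ⊆ e '' L :=
    closure_minimal (Set.image_mono (fun a ⟨n, hn⟩ => hn ▸ hx n)) hLK
  have hKY : K ⊆ e '' (Y : Set X) := closure_minimal (Set.image_mono hxY) hYw
  have hKcomp : IsCompact K := hL.of_isClosed_subset isClosed_closure hKL
  haveI : CompactSpace K := isCompact_iff_compactSpace.mp hKcomp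
  let Φ : K → (ℕ → ℝ) := fun w i => g i (e.symm w.1)
  have hΦc : Continuous Φ :=
    have hval : Continuous (fun w : K => (w.1 : WeakSpace ℝ X)) := continuous_subtype_val
    continuous_pi fun i => (WeakBilin.eval_continuous _ (g i)).comp hval
  have hΦi : Function.Injective Φ := by
    rintro ⟨u, hu⟩ ⟨v, hv⟩ h
    obtain ⟨yu, hyu, rfl⟩ := hKY hu
    obtain ⟨yv, hyv, rfl⟩ := hKY hv
    have hzero : ∀ i, g i (yu - yv) = 0 := by
      intro i
      have := congrFun h i
      simp only [Φ, LinearEquiv.symm_apply_apply] at this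
      rw [map_sub, this, sub_self]
    have := hsep _ (Y.sub_mem hyu hyv) hzero
    simp only [Subtype.mk_eq_mk]
    exact congrArg e (sub_eq_zero.mp this)
  haveI : FirstCountableTopology K :=
    (hΦc.isClosedEmbedding hΦi).toIsEmbedding.firstCountableTopology
  have hmem : ∀ n, e (x n) ∈ K := fun n => subset_closure ⟨x n, ⟨n, rfl⟩, rfl⟩
  obtain ⟨a, φ, hφ, ha⟩ := CompactSpace.tendsto_subseq (fun n => (⟨e (x n), hmem n⟩ : K))
  obtain ⟨z, hz, hez⟩ := hKL a.2
  refine ⟨z, hz, φ, hφ, fun f => ?_⟩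
  have h1 : Tendsto (fun j => e (x (φ j))) atTop (𝓝 a.1) :=
    ((continuous_subtype_val).tendsto a).comp ha
  have h2 := ((WeakBilin.eval_continuous _ f).tendsto a.1).comp h1
  have hz' : f z = (topDualPairing ℝ X).flip a.1 f := by rw [← hez]; rfl
  rw [hz']
  exact h2

end Aux

theorem schur_weaklyCompact_isCompact {X : Type*} [NormedAddCommGroup X] [NormedSpace ℝ X]
    [CompleteSpace X] (h : SchurProperty X) {L : Set X} (hL : IsWeaklyCompact L) :
    IsCompact L := by
  have hseq : IsSeqCompact L := by
    intro x hx
    obtain ⟨x0, hx0L, φ, hφ, hconv⟩ := weak_seq_subseq hL x hx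
    exact ⟨x0, hx0L, φ, hφ, h (fun j => x (φ j)) x0 hconv⟩
  exact hseq.isCompact

theorem schur_implies_propertyK (X : Type*) [NormedAddCommGroup X] [NormedSpace ℝ X]
    [CompleteSpace X] (h : SchurProperty X) : PropertyK X := by
  intro f g hfg
  refine ⟨f, g, ⟨fun k => {k}, fun _ => 1, fun k => ⟨k, Finset.mem_singleton_self k⟩,
    ?_, fun _ => zero_le_one, fun k => Finset.sum_singleton _ _, fun k => by simp⟩, ?_⟩
  · intro k m m' hm hm'
    rw [Finset.mem_singleton] at hm hm'
    omega
  · -- Mackey convergence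
    obtain ⟨C, hC⟩ : ∃ C, ∀ n, ‖f n‖ ≤ C := by
      apply banach_steinhaus
      intro x
      obtain ⟨B, hB⟩ := (hfg x).norm.bddAbove_range
      exact ⟨B, fun i => hB ⟨i, rfl⟩⟩
    intro L hLw ε hε
    have hLc : IsCompact L := schur_weaklyCompact_isCompact h hLw
    set M : ℝ := max C ‖g‖ + 1 with hMdef
    have hM : 0 < M := by
      have : (0 : ℝ) ≤ max C ‖g‖ := le_trans (norm_nonneg g) (le_max_right _ _)
      linarith
    have hCM : C ≤ M := by have := le_max_left C ‖g‖; linarith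
    have hgM : ‖g‖ ≤ M := by have := le_max_right C ‖g‖; linarith
    set δ : ℝ := ε / (4 * M) with hδdef
    have hδ : 0 < δ := by positivity
    obtain ⟨t, htfin, htsub⟩ := Metric.totallyBounded_iff.mp hLc.totallyBounded δ hδ
    have hev : ∀ᶠ n in atTop, ∀ c ∈ t, |f n c - g c| < ε / 4 := by
      rw [Filter.eventually_all_finite htfin]
      intro c _
      obtain ⟨N, hN⟩ := Metric.tendsto_atTop.mp (hfg c) (ε / 4) (by positivity)
      exact Filter.eventually_atTop.2 ⟨N, fun n hn => by
        have := hN n hn; rwa [Real.dist_eq] at this⟩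
    filter_upwards [hev] with n hn x hx
    obtain ⟨c, hct, hcd⟩ : ∃ c ∈ t, dist x c < δ := by
      have := htsub hx
      simp only [Set.mem_iUnion, Metric.mem_ball, exists_prop] at this
      exact this
    have key : ∀ (T : StrongDual ℝ X), ‖T‖ ≤ M → |T x - T c| ≤ ε / 4 := by
      intro T hT
      have h1 : |T x - T c| ≤ ‖T‖ * ‖x - c‖ := by
        rw [← map_sub, ← Real.norm_eq_abs]
        exact T.le_opNorm (x - c)
      have h2 : ‖x - c‖ ≤ δ := by rw [← dist_eq_norm] at *; linarith
      calc |T x - T c| ≤ ‖T‖ * ‖x - c‖ := h1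
        _ ≤ M * δ := mul_le_mul hT h2 (norm_nonneg _) (le_of_lt hM)
        _ = ε / 4 := by rw [hδdef, mul_div_assoc', div_eq_div_iff (mul_pos four_pos hM).ne' four_ne_zero]; ring
    have e1 : |f n x - f n c| ≤ ε / 4 := key (f n) (le_trans (hC n) hCM)
    have e2 : |g c - g x| ≤ ε / 4 := by
      rw [abs_sub_comm]; exact key g hgM
    have e3 : |f n c - g c| < ε / 4 := hn c hct
    have : f n x - g x = (f n x - f n c) + (f n c - g c) + (g c - g x) := by ring
    rw [this]
    calc |(f n x - f n c) + (f n c - g c) + (g c - g x)|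
        ≤ |(f n x - f n c) + (f n c - g c)| + |g c - g x| := abs_add_le _ _
      _ ≤ |f n x - f n c| + |f n c - g c| + |g c - g x| :=
          add_le_add_left (abs_add_le _ _) _
      _ < ε := by linarith
end

section
/- Every Grothendieck Banach space has property (K). In particular, every reflexive Banach space has property (K). -/
open NormedSpace Filter

/-- A Banach space is Grothendieck if every weak*-convergent sequence in the dual
is weakly convergent. -/
def GrothendieckSpace (X : Type*) [NormedAddCommGroup X] [NormedSpace ℝ X] : Prop :=
  ∀ (f : ℕ → StrongDual ℝ X) (g : StrongDual ℝ X), WStarTendsto f g →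
    ∀ F : StrongDual ℝ (StrongDual ℝ X), Tendsto (fun n => F (f n)) atTop (nhds (F g))

lemma isWeaklyCompact_bounded {X : Type*} [NormedAddCommGroup X] [NormedSpace ℝ X]
    {L : Set X} (hL : IsWeaklyCompact L) : ∃ C : ℝ, 0 ≤ C ∧ ∀ x ∈ L, ‖x‖ ≤ C := by
  obtain ⟨C', hC'⟩ : ∃ C', ∀ i : L, ‖inclusionInDoubleDual ℝ X (i : X)‖ ≤ C' := by
    apply banach_steinhaus
    intro φ
    have hc : Continuous fun w : WeakSpace ℝ X => (topDualPairing ℝ X).flip w φ :=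
      WeakBilin.eval_continuous _ φ
    obtain ⟨C, hC⟩ := (isBounded_iff_forall_norm_le).mp (hL.image hc).isBounded
    refine ⟨C, fun i => ?_⟩
    have : (fun w : WeakSpace ℝ X => (topDualPairing ℝ X).flip w φ) (toWeakSpace ℝ X (i : X))
        ∈ (fun w : WeakSpace ℝ X => (topDualPairing ℝ X).flip w φ) '' (toWeakSpace ℝ X '' L) :=
      Set.mem_image_of_mem _ (Set.mem_image_of_mem _ i.2)
    have h2 := hC _ this
    exact h2
  refine ⟨max C' 0, le_max_right _ _, fun x hx => ?_⟩
  have := hC' ⟨x, hx⟩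
  have hn : ‖(inclusionInDoubleDual ℝ X) x‖ = ‖x‖ :=
    (inclusionInDoubleDualLi ℝ (E := X)).norm_map x
  rw [hn] at this
  exact le_max_of_le_left this

lemma mackey_of_norm_tendsto {X : Type*} [NormedAddCommGroup X] [NormedSpace ℝ X]
    {y : ℕ → StrongDual ℝ X} {h : StrongDual ℝ X}
    (hy : Tendsto (fun n => ‖y n - h‖) atTop (nhds 0)) : MackeyTendsto y h := by
  intro L hL ε hε
  obtain ⟨C, hC0, hC⟩ := isWeaklyCompact_bounded hL
  have hev : ∀ᶠ n in atTop, ‖y n - h‖ < ε / (C + 1) :=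
    hy.eventually (gt_mem_nhds (by positivity))
  filter_upwards [hev] with n hn x hx
  have h1 : |y n x - h x| = ‖(y n - h) x‖ := by
    rw [ContinuousLinearMap.sub_apply, Real.norm_eq_abs]
  rw [h1]
  calc ‖(y n - h) x‖ ≤ ‖y n - h‖ * ‖x‖ := (y n - h).le_opNorm x
    _ ≤ ‖y n - h‖ * (C + 1) := by
        have := hC x hx
        nlinarith [norm_nonneg (y n - h)]
    _ < (ε / (C + 1)) * (C + 1) := by
        apply mul_lt_mul_of_pos_right hn (by positivity)
    _ = ε := by field_simp

theorem grothendieck_implies_propertyK (X : Type*) [NormedAddCommGroup X]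
    [NormedSpace ℝ X] [CompleteSpace X] :
    (GrothendieckSpace X → PropertyK X) ∧
    (Function.Surjective (NormedSpace.inclusionInDoubleDual ℝ X) → PropertyK X) := by
  have main : GrothendieckSpace X → PropertyK X := by
    intro hG f g hfg
    have hw : ∀ F : StrongDual ℝ (StrongDual ℝ X), Tendsto (fun n => F (f n)) atTop (nhds (F g)) :=
      hG f g hfg
    -- g is in the norm closure of the convex hull of every tail of f
    have hA : ∀ N : ℕ, g ∈ closure (convexHull ℝ (f '' Set.Ici N)) := by
      intro N
      by_contra hg
      obtain ⟨F, u, hFu, hug⟩ := geometric_hahn_banach_closed_point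
        ((convex_convexHull ℝ _).closure) isClosed_closure hg
      have h1 : ∀ᶠ n in atTop, F (f n) ≤ u := by
        filter_upwards [eventually_ge_atTop N] with n hn
        exact (hFu _ (subset_closure (subset_convexHull ℝ _ ⟨n, hn, rfl⟩))).le
      have h2 : F g ≤ u := le_of_tendsto (hw F) h1
      exact absurd hug (not_lt.mpr h2)
    -- extraction of finitely supported convex combinations
    have hB : ∀ N k : ℕ, ∃ (J : Finset ℕ) (v : ℕ → ℝ), J.Nonempty ∧ (∀ n ∈ J, N ≤ n) ∧
        (∀ n, 0 ≤ v n) ∧ (∑ n ∈ J, v n = 1) ∧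
        ‖(∑ n ∈ J, v n • f n) - g‖ < 1 / (k + 1) := by
      intro N k
      have hε : (0:ℝ) < 1 / (k + 1) := by positivity
      obtain ⟨z, hz, hdist⟩ := Metric.mem_closure_iff.mp (hA N) _ hε
      rw [convexHull_eq] at hz
      obtain ⟨ι, t, w, zf, hw0, hw1, hzs, hcm⟩ := hz
      have hmem : ∀ i : t, ∃ n, N ≤ n ∧ f n = zf i := by
        rintro ⟨i, hi⟩
        obtain ⟨n, hn, hfn⟩ := hzs i hi
        exact ⟨n, hn, hfn⟩
      choose m hmN hfm using hmem
      have htne : t.Nonempty := Finset.nonempty_of_sum_ne_zero (by rw [hw1]; norm_num)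
      refine ⟨t.attach.image m, fun n => ∑ i ∈ t.attach.filter (fun i => m i = n), w i,
        ?_, ?_, ?_, ?_, ?_⟩
      · exact (Finset.attach_nonempty_iff.mpr htne).image m
      · intro n hn
        obtain ⟨i, _, rfl⟩ := Finset.mem_image.mp hn
        exact hmN i
      · intro n
        exact Finset.sum_nonneg fun i _ => hw0 i i.2
      · rw [Finset.sum_fiberwise_of_maps_to (fun i hi => Finset.mem_image_of_mem m hi)]
        rw [Finset.sum_attach t w]
        exact hw1
      · have hzz : (∑ n ∈ t.attach.image m,
            (∑ i ∈ t.attach.filter (fun i => m i = n), w i) • f n) = z := by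
          have : ∀ n ∈ t.attach.image m,
              (∑ i ∈ t.attach.filter (fun i => m i = n), w i) • f n
              = ∑ i ∈ t.attach.filter (fun i => m i = n), w i • f (m i) := by
            intro n hn
            rw [Finset.sum_smul]
            exact Finset.sum_congr rfl fun i hi => by
              rw [(Finset.mem_filter.mp hi).2]
          rw [Finset.sum_congr rfl this,
            Finset.sum_fiberwise_of_maps_to (fun i hi => Finset.mem_image_of_mem m hi)]
          have : (∑ i ∈ t.attach, w i • f (m i)) = ∑ i ∈ t, w i • zf i := by
            rw [← Finset.sum_attach t (fun i => w i • zf i)]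
            exact Finset.sum_congr rfl fun i _ => by rw [hfm i]
          rw [this, ← Finset.centerMass_eq_of_sum_1 (z := zf) (hw := hw1), hcm]
        rw [hzz, ← dist_eq_norm, dist_comm]
        exact hdist
    choose J v hJne hJge hv0 hv1 hvlt using hB
    -- recursive block construction
    let N : ℕ → ℕ := fun k => Nat.rec 0 (fun k Nk => (J Nk k).sup id + 1) k
    let I : ℕ → Finset ℕ := fun k => J (N k) k
    have hIne : ∀ k, (I k).Nonempty := fun k => hJne _ _
    have hIge : ∀ k n, n ∈ I k → N k ≤ n := fun k n h => hJge _ _ _ h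
    have hIlt : ∀ k n, n ∈ I k → n < N (k + 1) := by
      intro k n h
      have : n ≤ (J (N k) k).sup id := Finset.le_sup (f := id) h
      exact Nat.lt_succ_of_le this
    have hNmono : StrictMono N := by
      apply strictMono_nat_of_lt_succ
      intro k
      obtain ⟨n, hn⟩ := hIne k
      exact lt_of_le_of_lt (hIge k n hn) (hIlt k n hn)
    have horder : ∀ k j m m', k < j → m ∈ I k → m' ∈ I j → m < m' := by
      intro k j m m' hkj hm hm'
      exact lt_of_lt_of_le (hIlt k m hm)
        (le_trans (hNmono.monotone hkj) (hIge j m' hm'))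
    have hdisj : ∀ k j n, n ∈ I k → n ∈ I j → k = j := by
      intro k j n hk hj
      by_contra hne
      rcases Nat.lt_or_ge k j with h | h
      · exact lt_irrefl n (horder k j n n h hk hj)
      · exact lt_irrefl n (horder j k n n (lt_of_le_of_ne h (Ne.symm hne)) hj hk)
    classical
    let a : ℕ → ℝ := fun n =>
      if h : ∃ k, n ∈ I k then v (N (Nat.find h)) (Nat.find h) n else 0
    have ha_eq : ∀ k n, n ∈ I k → a n = v (N k) k n := by
      intro k n hn
      have h : ∃ k, n ∈ I k := ⟨k, hn⟩
      have hk : Nat.find h = k := hdisj _ _ _ (Nat.find_spec h) hn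
      simp only [a, dif_pos h, hk]
    refine ⟨fun k => ∑ n ∈ I k, a n • f n, g, ⟨I, a, hIne,
      fun k m m' hm hm' => horder k (k+1) m m' (Nat.lt_succ_self k) hm hm', ?_, ?_, fun k => rfl⟩, ?_⟩
    · intro n
      by_cases h : ∃ k, n ∈ I k
      · simp only [a, dif_pos h]; exact hv0 _ _ _
      · simp only [a, dif_neg h]; exact le_refl 0
    · intro k
      rw [Finset.sum_congr rfl (fun n hn => ha_eq k n hn)]
      exact hv1 _ _
    · apply mackey_of_norm_tendsto
      have hkey : ∀ k, ‖(∑ n ∈ I k, a n • f n) - g‖ < 1 / (k + 1) := by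
        intro k
        have : (∑ n ∈ I k, a n • f n) = ∑ n ∈ I k, v (N k) k n • f n :=
          Finset.sum_congr rfl fun n hn => by rw [ha_eq k n hn]
        rw [this]
        exact hvlt _ _
      apply squeeze_zero (fun k => norm_nonneg _) (fun k => (hkey k).le)
      exact tendsto_one_div_add_atTop_nhds_zero_nat
  refine ⟨main, fun hS => main ?_⟩
  intro f g hfg F
  obtain ⟨x, rfl⟩ := hS F
  simpa [NormedSpace.dual_def] using hfg x
end

section
/- The Banach space c₀ fails property (K). Specifically, the canonical unit vector basis (e_n*) of ℓ¹ = c₀* is weak*-null but admits no convex block subsequence converging to 0 in the Mackey topology μ(ℓ¹, c₀). -/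
open NormedSpace Filter Topology

/-- c₀, the space of real sequences vanishing at infinity, with the sup norm. -/
noncomputable abbrev czero := ZeroAtInftyContinuousMap ℕ ℝ

/-! ### Auxiliary material -/

/-- The indicator of a finite set, as an element of `c₀`. -/
noncomputable def indC (I : Finset ℕ) : czero where
  toFun := fun n => if n ∈ I then (1 : ℝ) else 0
  continuous_toFun := continuous_of_discreteTopology
  zero_at_infty' := by
    rw [Filter.cocompact_eq_cofinite]
    apply tendsto_nhds_of_eventually_eq
    filter_upwards [I.finite_toSet.compl_mem_cofinite] with n hn
    exact if_neg hn

lemma indC_apply (I : Finset ℕ) (n : ℕ) : indC I n = if n ∈ I then (1 : ℝ) else 0 := rfl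

section blocks

variable {I : ℕ → Finset ℕ}
  (h1 : ∀ k, (I k).Nonempty)
  (h2 : ∀ k m m', m ∈ I k → m' ∈ I (k + 1) → m < m')

include h1 h2 in
lemma block_lt : ∀ k k', k < k' → ∀ m ∈ I k, ∀ m' ∈ I k', m < m' := by
  have key : ∀ d k, ∀ m ∈ I k, ∀ m' ∈ I (k + d + 1), m < m' := by
    intro d
    induction d with
    | zero => exact fun k m hm m' hm' => h2 k m m' hm hm'
    | succ d ih =>
      intro k m hm m' hm'
      obtain ⟨p, hp⟩ := h1 (k + d + 1)
      have : k + (d + 1) + 1 = (k + d + 1) + 1 := by omega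
      rw [this] at hm'
      exact (ih k m hm p hp).trans (h2 (k + d + 1) p m' hp hm')
  intro k k' hkk' m hm m' hm'
  obtain ⟨d, rfl⟩ : ∃ d, k' = k + d + 1 := ⟨k' - k - 1, by omega⟩
  exact key d k m hm m' hm'

include h1 h2 in
lemma block_disjoint {k k' : ℕ} (h : k ≠ k') : ∀ n, n ∈ I k → n ∈ I k' → False := by
  intro n hn hn'
  rcases h.lt_or_gt with hlt | hlt
  · exact lt_irrefl n (block_lt h1 h2 k k' hlt n hn n hn')
  · exact lt_irrefl n (block_lt h1 h2 k' k hlt n hn' n hn)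

include h1 h2 in
lemma block_le_of_mem : ∀ k, ∀ m ∈ I k, k ≤ m := by
  intro k
  induction k with
  | zero => exact fun m _ => Nat.zero_le m
  | succ k ih =>
    intro m hm
    obtain ⟨p, hp⟩ := h1 k
    exact Nat.succ_le_of_lt (lt_of_le_of_lt (ih p hp) (h2 k p m hp hm))

end blocks

section eval

variable (e : ℕ → StrongDual ℝ czero) (he : ∀ (n : ℕ) (x : czero), e n x = x n)
variable {I : ℕ → Finset ℕ}
  (h1 : ∀ k, (I k).Nonempty)
  (h2 : ∀ k m m', m ∈ I k → m' ∈ I (k + 1) → m < m')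

include he h1 h2 in
/-- Any continuous functional on `c₀` tends to `0` along the block indicators. -/
lemma tendsto_eval_indC (f : StrongDual ℝ czero) :
    Tendsto (fun k => f (indC (I k))) atTop (𝓝 0) := by
  rw [← Nat.cofinite_eq_atTop, NormedAddCommGroup.tendsto_nhds_zero]
  intro ε hε
  rw [Filter.eventually_cofinite]
  by_contra hinf
  have hS : {k | ¬ ‖f (indC (I k))‖ < ε}.Infinite := hinf
  obtain ⟨T, hTS, hTcard⟩ := hS.exists_subset_card_eq (⌈‖f‖ / ε⌉₊ + 1)
  set g : ℕ → ℝ := fun k => if f (indC (I k)) < 0 then -1 else 1 with hg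
  set s : czero := ∑ k ∈ T, g k • indC (I k) with hs
  have hsn : ∀ n : ℕ, s n = ∑ k ∈ T, g k * (if n ∈ I k then (1:ℝ) else 0) := by
    intro n
    rw [← he n s, hs, map_sum]
    refine Finset.sum_congr rfl fun k _ => ?_
    rw [map_smul, he, indC_apply, smul_eq_mul]
  have habs_g : ∀ k, |g k| = 1 := by
    intro k; by_cases h : f (indC (I k)) < 0 <;> simp [hg, h]
  have hnorm : ‖s‖ ≤ 1 := by
    rw [← ZeroAtInftyContinuousMap.norm_toBCF_eq_norm]
    rw [BoundedContinuousFunction.norm_le (by norm_num : (0:ℝ) ≤ 1)]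
    intro n
    have hsbcf : s.toBCF n = s n := rfl
    rw [hsbcf, hsn, Real.norm_eq_abs]
    by_cases hex : ∃ k ∈ T, n ∈ I k
    · obtain ⟨k0, hk0T, hk0⟩ := hex
      rw [Finset.sum_eq_single_of_mem k0 hk0T ?_]
      · rw [if_pos hk0, mul_one]; exact le_of_eq (habs_g k0)
      · intro k hkT hkne
        rw [if_neg, mul_zero]
        exact fun hn => block_disjoint h1 h2 hkne n hn hk0
    · rw [Finset.sum_eq_zero, abs_zero]
      · norm_num
      · intro k hk
        rw [if_neg (fun hn => hex ⟨k, hk, hn⟩), mul_zero]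
  have hterm : ∀ k ∈ T, ε ≤ g k * f (indC (I k)) := by
    intro k hk
    have hk' : ε ≤ ‖f (indC (I k))‖ := not_lt.mp (hTS hk)
    rw [Real.norm_eq_abs] at hk'
    by_cases h : f (indC (I k)) < 0
    · have hgk : g k = -1 := by simp [hg, h]
      rw [hgk, neg_one_mul]
      rw [abs_of_neg h] at hk'; linarith
    · have hgk : g k = 1 := by simp [hg, h]
      rw [hgk, one_mul]
      rw [abs_of_nonneg (not_lt.mp h)] at hk'; linarith
  have hfs : f s = ∑ k ∈ T, g k * f (indC (I k)) := by
    rw [hs, map_sum]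
    exact Finset.sum_congr rfl fun k _ => by rw [map_smul, smul_eq_mul]
  have hsumge : (T.card : ℝ) * ε ≤ f s := by
    rw [hfs]
    have := Finset.card_nsmul_le_sum T (fun k => g k * f (indC (I k))) ε hterm
    rwa [nsmul_eq_mul] at this
  have hfle : f s ≤ ‖f‖ := by
    calc f s ≤ ‖f s‖ := le_abs_self _
    _ ≤ ‖f‖ * ‖s‖ := f.le_opNorm s
    _ ≤ ‖f‖ * 1 := by
        exact mul_le_mul_of_nonneg_left hnorm (norm_nonneg f)
    _ = ‖f‖ := mul_one _
  have hceil : ‖f‖ / ε < (T.card : ℝ) := by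
    rw [hTcard]
    push_cast
    exact lt_of_le_of_lt (Nat.le_ceil _) (by linarith)
  rw [div_lt_iff₀ hε] at hceil
  linarith

include he h1 h2 in
/-- The set consisting of `0` and all block indicators is weakly compact. -/
lemma isWeaklyCompact_indC :
    IsWeaklyCompact (insert 0 (Set.range fun k => indC (I k))) := by
  have hinj : Function.Injective ((topDualPairing ℝ czero).flip) := by
    intro x y hxy
    ext n
    have := congrArg (fun φ => φ (e n)) hxy
    simpa only [LinearMap.flip_apply, topDualPairing_apply, he] using this
  unfold IsWeaklyCompact
  have himg : toWeakSpace ℝ czero '' (insert 0 (Set.range fun k => indC (I k)))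
      = insert (toWeakSpace ℝ czero 0)
          (Set.range fun k => toWeakSpace ℝ czero (indC (I k))) := by
    rw [Set.image_insert_eq]
    congr 1
    rw [← Set.range_comp]
    rfl
  rw [himg]
  apply Filter.Tendsto.isCompact_insert_range_of_cofinite
  rw [Nat.cofinite_eq_atTop]
  refine (WeakBilin.tendsto_iff_forall_eval_tendsto (B := (topDualPairing ℝ czero).flip) hinj).mpr ?_
  intro f
  have h0 : (topDualPairing ℝ czero).flip (toWeakSpace ℝ czero 0) f = 0 := by
    exact map_zero f
  rw [h0]
  have heq : (fun k => (topDualPairing ℝ czero).flip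
      (toWeakSpace ℝ czero (indC (I k))) f) = fun k => f (indC (I k)) := rfl
  rw [heq]
  exact tendsto_eval_indC e he h1 h2 f

end eval

theorem czero_fails_propertyK (e : ℕ → StrongDual ℝ czero)
    (he : ∀ (n : ℕ) (x : czero), e n x = x n) :
    ¬ PropertyK czero ∧ WStarTendsto e 0 ∧
      ¬ ∃ y : ℕ → StrongDual ℝ czero, IsConvexBlock e y ∧ MackeyTendsto y 0 := by
  -- weak* nullity of the unit vector basis
  have hwstar : WStarTendsto e 0 := by
    intro x
    have hx := zero_at_infty x
    rw [cocompact_eq_atTop (α := ℕ)] at hx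
    simpa only [he, ContinuousLinearMap.zero_apply] using hx
  -- no convex block subsequence is Mackey null
  have hnoblock : ¬ ∃ y : ℕ → StrongDual ℝ czero, IsConvexBlock e y ∧ MackeyTendsto y 0 := by
    rintro ⟨y, ⟨I, a, h1, h2, h3, h4, h5⟩, hM⟩
    have hL := isWeaklyCompact_indC e he h1 h2
    have := hM _ hL 1 one_pos
    obtain ⟨k, hk⟩ := this.exists
    have hmem : indC (I k) ∈ insert 0 (Set.range fun k => indC (I k)) :=
      Set.mem_insert_of_mem _ ⟨k, rfl⟩
    have hyk : y k (indC (I k)) = 1 := by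
      rw [h5 k, ContinuousLinearMap.sum_apply]
      rw [← h4 k]
      refine Finset.sum_congr rfl fun n hn => ?_
      rw [ContinuousLinearMap.smul_apply, he, indC_apply, if_pos hn, smul_eq_mul, mul_one]
    have := hk _ hmem
    rw [hyk] at this
    norm_num at this
  refine ⟨?_, hwstar, hnoblock⟩
  -- Property (K) fails
  intro hK
  obtain ⟨y, h, hblock, hM⟩ := hK e 0 hwstar
  obtain ⟨I, a, h1, h2, h3, h4, h5⟩ := hblock
  -- the Mackey limit must be 0
  have hzero : h = 0 := by
    ext x
    -- convergence on the singleton {x}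
    have hsingle : IsWeaklyCompact ({x} : Set czero) := by
      unfold IsWeaklyCompact
      rw [Set.image_singleton]
      exact isCompact_singleton
    have hconv : Tendsto (fun k => y k x) atTop (𝓝 (h x)) := by
      rw [Metric.tendsto_atTop]
      intro ε hε
      obtain ⟨N, hN⟩ := (hM _ hsingle ε hε).exists_forall_of_atTop
      exact ⟨N, fun n hn => by
        rw [Real.dist_eq]; exact hN n hn x rfl⟩
    -- but it also converges to 0
    have hconv0 : Tendsto (fun k => y k x) atTop (𝓝 0) := by
      rw [NormedAddCommGroup.tendsto_nhds_zero]
      intro ε hε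
      have hx := zero_at_infty x
      rw [cocompact_eq_atTop (α := ℕ)] at hx
      have := (NormedAddCommGroup.tendsto_nhds_zero.mp hx) (ε/2) (by linarith)
      rw [eventually_atTop] at this
      obtain ⟨N, hN⟩ := this
      rw [eventually_atTop]
      refine ⟨N, fun k hkN => ?_⟩
      have hb : ‖y k x‖ ≤ ε/2 := by
        rw [h5 k, ContinuousLinearMap.sum_apply, Real.norm_eq_abs]
        calc |∑ n ∈ I k, (a n • e n) x| ≤ ∑ n ∈ I k, |(a n • e n) x| :=
              Finset.abs_sum_le_sum_abs _ _
        _ ≤ ∑ n ∈ I k, a n * (ε/2) := by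
            refine Finset.sum_le_sum fun n hn => ?_
            rw [ContinuousLinearMap.smul_apply, he, smul_eq_mul, abs_mul,
              abs_of_nonneg (h3 n)]
            refine mul_le_mul_of_nonneg_left ?_ (h3 n)
            have hnN : N ≤ n := le_trans (le_trans hkN (block_le_of_mem h1 h2 k n hn)) le_rfl
            have := hN n hnN
            rw [Real.norm_eq_abs] at this
            exact le_of_lt this
        _ = ε/2 := by rw [← Finset.sum_mul, h4 k, one_mul]
      calc ‖y k x‖ ≤ ε/2 := hb
      _ < ε := by linarith
    have := tendsto_nhds_unique hconv hconv0
    simpa using this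
  exact hnoblock ⟨y, ⟨I, a, h1, h2, h3, h4, h5⟩, hzero ▸ hM⟩
end

section
/- Let X be a Banach space with property (K) and Y ⊆ X a weak*-extensible subspace. Then Y has property (K). -/
open NormedSpace Filter

/-- A closed subspace Y of X is weak*-extensible if every weak*-null sequence in Y*
admits a subsequence which extends to a weak*-null sequence in X*. -/
def WStarExtensible (X : Type*) [NormedAddCommGroup X] [NormedSpace ℝ X]
    (Y : Submodule ℝ X) : Prop :=
  ∀ g : ℕ → StrongDual ℝ ↥Y, WStarTendsto g 0 →
    ∃ φ : ℕ → ℕ, StrictMono φ ∧ ∃ f : ℕ → StrongDual ℝ X, WStarTendsto f 0 ∧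
      ∀ n, (f n).comp Y.subtypeL = g (φ n)
lemma isWeaklyCompact_image {X : Type*} [NormedAddCommGroup X] [NormedSpace ℝ X]
    (Y : Submodule ℝ X) {L : Set ↥Y} (hL : IsWeaklyCompact L) :
    IsWeaklyCompact ((Subtype.val : ↥Y → X) '' L) := by
  have hmap : Continuous (WeakSpace.map (Y.subtypeL : ↥Y →L[ℝ] X)) :=
    (WeakSpace.map (Y.subtypeL : ↥Y →L[ℝ] X)).continuous
  have := hL.image hmap
  have heq : ⇑(toWeakSpace ℝ X) '' ((Subtype.val : ↥Y → X) '' L)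
      = ⇑(WeakSpace.map (Y.subtypeL : ↥Y →L[ℝ] X)) '' (⇑(toWeakSpace ℝ ↥Y) '' L) := by
    rw [Set.image_image, Set.image_image]
    rfl
  unfold IsWeaklyCompact
  rw [heq]
  exact this

theorem propertyK_of_wstarExtensible (X : Type*) [NormedAddCommGroup X]
    [NormedSpace ℝ X] [CompleteSpace X] (Y : Submodule ℝ X)
    (hYc : IsClosed (Y : Set X)) (hext : WStarExtensible X Y)
    (hX : PropertyK X) : PropertyK ↥Y := by
  classical
  intro f g hfg
  have h0 : WStarTendsto (fun n => f n - g) 0 := by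
    intro y
    have := (hfg y).sub (tendsto_const_nhds (α := ℕ) (x := g y))
    simpa using this
  obtain ⟨φ, hφ, F, hF0, hFr⟩ := hext _ h0
  obtain ⟨B, h, ⟨I, a, hne, hord, ha0, hasum, hB⟩, hM⟩ := hX F 0 hF0
  refine ⟨fun k => (B k).comp Y.subtypeL + g, h.comp Y.subtypeL + g, ?_, ?_⟩
  · refine ⟨fun k => (I k).image φ, a ∘ Function.invFun φ, ?_, ?_, ?_, ?_, ?_⟩
    · intro k; exact (hne k).image φ
    · rintro k m m' hm hm'
      simp only [Finset.mem_image] at hm hm'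
      obtain ⟨n, hn, rfl⟩ := hm
      obtain ⟨n', hn', rfl⟩ := hm'
      exact hφ (hord k n n' hn hn')
    · intro n; exact ha0 _
    · intro k
      rw [Finset.sum_image (fun x _ y _ hxy => hφ.injective hxy)]
      have : ∀ n ∈ I k, (a ∘ Function.invFun φ) (φ n) = a n := by
        intro n _
        simp [Function.leftInverse_invFun hφ.injective n]
      rw [Finset.sum_congr rfl this]
      exact hasum k
    · intro k
      rw [Finset.sum_image (fun x _ y _ hxy => hφ.injective hxy)]
      ext y
      have hBk := congrArg (fun (T : StrongDual ℝ X) => T (y : X)) (hB k)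
      simp only [ContinuousLinearMap.sum_apply, ContinuousLinearMap.smul_apply] at hBk
      have hcomp : ∀ n, F n (y : X) = f (φ n) y - g y := by
        intro n
        have := congrArg (fun (T : StrongDual ℝ ↥Y) => T y) (hFr n)
        simpa using this
      simp only [ContinuousLinearMap.add_apply, ContinuousLinearMap.comp_apply,
        Submodule.subtypeL_apply, ContinuousLinearMap.sum_apply,
        ContinuousLinearMap.smul_apply, Function.comp_apply,
        Function.leftInverse_invFun hφ.injective, hBk, hcomp, smul_eq_mul,
        mul_sub, Finset.sum_sub_distrib, ← Finset.sum_mul, hasum k, one_mul]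
      ring_nf
      exact (Finset.sum_congr rfl fun x _ => by
        rw [Function.leftInverse_invFun hφ.injective x]).symm
  · intro L hL ε hε
    filter_upwards [hM _ (isWeaklyCompact_image Y hL) ε hε] with n hn
    intro y hy
    have := hn (y : X) ⟨y, hy, rfl⟩
    simpa using this
end

section
/- Let X be a Banach space such that B_{X*} is weak*-sequentially compact. Then every closed subspace of X is weak*-extensible. -/
open NormedSpace Filter

theorem wstarExtensible_of_seqCompactBall (X : Type*) [NormedAddCommGroup X]
    [NormedSpace ℝ X] [CompleteSpace X]
    (hseq : ∀ f : ℕ → StrongDual ℝ X, (∀ n, ‖f n‖ ≤ 1) →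
      ∃ φ : ℕ → ℕ, StrictMono φ ∧ ∃ g : StrongDual ℝ X, WStarTendsto (f ∘ φ) g) :
    ∀ Y : Submodule ℝ X, IsClosed (Y : Set X) → WStarExtensible X Y := by
  intro Y hY g hg
  haveI : CompleteSpace ↥Y := hY.completeSpace_coe
  -- uniform bound on g via Banach–Steinhaus
  obtain ⟨C, hC⟩ : ∃ C, ∀ n, ‖g n‖ ≤ C := by
    apply banach_steinhaus
    intro y
    obtain ⟨M, hM⟩ := (hg y).norm.bddAbove_range
    exact ⟨M, fun n => hM ⟨n, rfl⟩⟩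
  have hC0 : (0:ℝ) ≤ C := le_trans (g 0).opNorm_nonneg (hC 0)
  -- Hahn-Banach extensions
  choose f hf hfn using fun n => exists_extension_norm_eq Y (g n)
  have hpos : (0:ℝ) < C + 1 := by linarith
  set u : ℕ → StrongDual ℝ X := fun n => (C + 1)⁻¹ • f n with hu
  have hub : ∀ n, ‖u n‖ ≤ 1 := by
    intro n
    rw [hu, norm_smul, norm_inv, Real.norm_of_nonneg hpos.le, hfn n]
    rw [inv_mul_le_iff₀ hpos, mul_one]
    linarith [hC n]
  obtain ⟨φ, hφ, h0, hh0⟩ := hseq u hub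
  set h : StrongDual ℝ X := (C + 1) • h0 with hh
  have key : ∀ x : X, Tendsto (fun n => f (φ n) x) atTop (nhds (h x)) := by
    intro x
    have := (hh0 x).const_mul (C + 1)
    simp only [Function.comp, hu, ContinuousLinearMap.smul_apply, smul_eq_mul] at this ⊢
    have heq : ∀ n, (C + 1) * ((C + 1)⁻¹ * f (φ n) x) = f (φ n) x := by
      intro n; field_simp
    simpa [heq, hh] using this
  have hY0 : ∀ y : ↥Y, h ↑y = 0 := by
    intro y
    have h1 : Tendsto (fun n => f (φ n) ↑y) atTop (nhds (h ↑y)) := key ↑y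
    have h2 : Tendsto (fun n => f (φ n) ↑y) atTop (nhds 0) := by
      have : (fun n => f (φ n) ↑y) = fun n => g (φ n) y := by
        ext n; exact hf (φ n) y
      rw [this]
      exact (hg y).comp hφ.tendsto_atTop
    exact tendsto_nhds_unique h1 h2
  refine ⟨φ, hφ, fun n => f (φ n) - h, ?_, ?_⟩
  · intro x
    have := (key x).sub_const (h x)
    simpa using this
  · intro n
    ext y
    simp only [ContinuousLinearMap.comp_apply, ContinuousLinearMap.sub_apply,
      Submodule.subtypeL_apply]
    rw [hf (φ n) y, hY0 y, sub_zero]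
end

section
/- If a Banach space X has property (K), then X contains no complemented subspace isomorphic to c₀. -/
open NormedSpace Filter

section Helpers

open ZeroAtInftyContinuousMap

/-- The indicator function of a finite set, as an element of `C₀(ℕ, ℝ)`. -/
noncomputable def indC0 (S : Finset ℕ) : ZeroAtInftyContinuousMap ℕ ℝ where
  toFun := fun m => if m ∈ S then 1 else 0
  continuous_toFun := continuous_of_discreteTopology
  zero_at_infty' := by
    rw [cocompact_eq_cofinite]
    apply Tendsto.congr' _ tendsto_const_nhds
    filter_upwards [S.finite_toSet.compl_mem_cofinite] with m hm
    simp_all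

@[simp] lemma indC0_apply (S : Finset ℕ) (m : ℕ) : indC0 S m = if m ∈ S then 1 else 0 := rfl

/-- Evaluation at a point, as a continuous linear functional on `C₀(ℕ, ℝ)`. -/
noncomputable def evC0 (n : ℕ) : ZeroAtInftyContinuousMap ℕ ℝ →L[ℝ] ℝ :=
  LinearMap.mkContinuous
    { toFun := fun f => f n, map_add' := fun f g => rfl, map_smul' := fun c f => rfl } 1
    (fun f => by
      simpa [← norm_toBCF_eq_norm] using f.toBCF.norm_coe_le_norm n)

@[simp] lemma evC0_apply (n : ℕ) (f : ZeroAtInftyContinuousMap ℕ ℝ) : evC0 n f = f n := rfl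

/-- Indicators of a sequence of finite sets whose elements strictly increase
are weakly null in `C₀(ℕ, ℝ)`. -/
lemma weak_null (I : ℕ → Finset ℕ)
    (hmono : ∀ k l, k < l → ∀ m ∈ I k, ∀ m' ∈ I l, m < m')
    (ψ : ZeroAtInftyContinuousMap ℕ ℝ →L[ℝ] ℝ) :
    Tendsto (fun k => ψ (indC0 (I k))) atTop (nhds 0) := by
  rw [tendsto_zero_iff_abs_tendsto_zero]
  apply Summable.tendsto_atTop_zero
  apply summable_of_sum_range_le (c := ‖ψ‖) (fun k => abs_nonneg _)
  intro N
  set c : ℕ → ℝ := fun k => if 0 ≤ ψ (indC0 (I k)) then (1:ℝ) else -1 with hc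
  set v : ZeroAtInftyContinuousMap ℕ ℝ := ∑ k ∈ Finset.range N, c k • indC0 (I k) with hv
  have hψv : ψ v = ∑ k ∈ Finset.range N, |ψ (indC0 (I k))| := by
    rw [hv, map_sum]
    refine Finset.sum_congr rfl (fun k _ => ?_)
    rw [map_smul, smul_eq_mul, hc]
    dsimp only
    split
    · rw [one_mul, abs_of_nonneg ‹_›]
    · rw [neg_one_mul, abs_of_neg (lt_of_not_ge ‹_›)]
  have hvnorm : ‖v‖ ≤ 1 := by
    rw [← norm_toBCF_eq_norm]
    refine BoundedContinuousFunction.norm_le (by norm_num) |>.2 (fun m => ?_)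
    have hvm : v.toBCF m = ∑ k ∈ Finset.range N, c k * (indC0 (I k) m) := by
      show v m = _
      rw [← evC0_apply, hv, map_sum]; simp
    rw [hvm]
    by_cases hex : ∃ k₀ ∈ Finset.range N, m ∈ I k₀
    · obtain ⟨k₀, hk₀N, hk₀⟩ := hex
      rw [Finset.sum_eq_single_of_mem k₀ hk₀N]
      · have : |c k₀| = 1 := by rw [hc]; dsimp only; split <;> simp
        simp [hk₀, this]
      · intro k hk hne
        rcases hne.lt_or_gt with h | h
        · rw [indC0_apply, if_neg, mul_zero]
          exact fun hm => lt_irrefl m (hmono k k₀ h m hm m hk₀)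
        · rw [indC0_apply, if_neg, mul_zero]
          exact fun hm => lt_irrefl m (hmono k₀ k h m hk₀ m hm)
    · push_neg at hex
      rw [Finset.sum_eq_zero (fun k hk => by rw [indC0_apply, if_neg (hex k hk), mul_zero])]
      norm_num
  calc ∑ k ∈ Finset.range N, |ψ (indC0 (I k))| = ψ v := hψv.symm
    _ ≤ |ψ v| := le_abs_self _
    _ ≤ ‖ψ‖ * ‖v‖ := ψ.le_opNorm v
    _ ≤ ‖ψ‖ := mul_le_of_le_one_right (norm_nonneg ψ) hvnorm

end Helpers

theorem propertyK_no_complemented_c0 (X : Type*) [NormedAddCommGroup X]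
    [NormedSpace ℝ X] [CompleteSpace X] (hX : PropertyK X) :
    ¬ ∃ (Y : Submodule ℝ X) (P : X →L[ℝ] X)
        (e : ↥Y ≃L[ℝ] ZeroAtInftyContinuousMap ℕ ℝ),
      (∀ x, P x ∈ Y) ∧ ∀ y ∈ Y, P y = y := by
  rintro ⟨Y, P, e, hPmem, hPid⟩
  have hinj : Function.Injective (topDualPairing ℝ X).flip := by
    intro x y hxy
    exact (NormedSpace.eq_iff_forall_dual_eq ℝ).2 (fun g => LinearMap.congr_fun hxy g)
  set P' : X →L[ℝ] Y := P.codRestrict Y hPmem with hP'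
  set f : ℕ → StrongDual ℝ X :=
    fun n => (evC0 n).comp (((e : Y →L[ℝ] ZeroAtInftyContinuousMap ℕ ℝ)).comp P') with hfdef
  have hf : ∀ n x, f n x = e (P' x) n := fun n x => rfl
  have hws' : ∀ x : X, Tendsto (fun n => f n x) atTop (nhds 0) := by
    intro x
    have := (e (P' x)).zero_at_infty'
    rw [cocompact_eq_cofinite, Nat.cofinite_eq_atTop] at this
    exact this
  have hws : WStarTendsto f 0 := by
    intro x
    simpa using hws' x
  obtain ⟨g, h, ⟨I, a, hne, hcons, ha0, hsum1, hgdef⟩, hM⟩ := hX f 0 hws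
  have hle : ∀ k, ∀ n ∈ I k, k ≤ n := by
    intro k
    induction k with
    | zero => exact fun n _ => Nat.zero_le n
    | succ k ih =>
      intro n hn
      obtain ⟨m, hm⟩ := hne k
      exact Nat.succ_le_of_lt (lt_of_le_of_lt (ih m hm) (hcons k m n hm hn))
  have hmono : ∀ k l, k < l → ∀ m ∈ I k, ∀ m' ∈ I l, m < m' := by
    intro k l hkl
    induction l, hkl using Nat.le_induction with
    | base => exact fun m hm m' hm' => hcons k m m' hm hm'
    | succ l hl ih =>
      intro m hm m' hm'
      obtain ⟨t, ht⟩ := hne l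
      exact lt_trans (ih m hm t ht) (hcons l t m' ht hm')
  have hg : ∀ k x, g k x = ∑ n ∈ I k, a n * f n x := by
    intro k x
    rw [hgdef k]
    simp [ContinuousLinearMap.sum_apply]
  -- the convex blocks tend to zero pointwise
  have hg0 : ∀ x : X, Tendsto (fun k => g k x) atTop (nhds 0) := by
    intro x
    rw [Metric.tendsto_atTop]
    intro ε hε
    obtain ⟨N, hN⟩ := Metric.tendsto_atTop.1 (hws' x) (ε/2) (by linarith)
    refine ⟨N, fun k hk => ?_⟩
    rw [Real.dist_eq, sub_zero, hg]
    calc |∑ n ∈ I k, a n * f n x| ≤ ∑ n ∈ I k, |a n * f n x| :=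
          Finset.abs_sum_le_sum_abs _ _
      _ ≤ ∑ n ∈ I k, a n * (ε/2) := by
          refine Finset.sum_le_sum (fun n hn => ?_)
          rw [abs_mul, abs_of_nonneg (ha0 n)]
          refine mul_le_mul_of_nonneg_left ?_ (ha0 n)
          have := hN n (le_trans hk (hle k n hn))
          rw [Real.dist_eq, sub_zero] at this
          exact le_of_lt this
      _ = ε/2 := by rw [← Finset.sum_mul, hsum1 k, one_mul]
      _ < ε := by linarith
  -- pointwise convergence to h from Mackey convergence on singletons
  have hsing : ∀ x : X, Tendsto (fun k => g k x) atTop (nhds (h x)) := by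
    intro x
    have hcpt : IsWeaklyCompact {x} := by
      unfold IsWeaklyCompact
      rw [Set.image_singleton]
      exact isCompact_singleton
    rw [Metric.tendsto_atTop]
    intro ε hε
    obtain ⟨N, hN⟩ := eventually_atTop.1 (hM {x} hcpt ε hε)
    exact ⟨N, fun k hk => by rw [Real.dist_eq]; exact hN k hk x rfl⟩
  have hh0 : ∀ x : X, h x = 0 := fun x => tendsto_nhds_unique (hsing x) (hg0 x)
  -- the test vectors
  set x : ℕ → X := fun k => ((e.symm (indC0 (I k)) : Y) : X) with hxdef
  have hfx : ∀ n k, f n (x k) = indC0 (I k) n := by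
    intro n k
    have h1 : P' (x k) = e.symm (indC0 (I k)) := by
      apply Subtype.ext
      show P ((e.symm (indC0 (I k)) : Y) : X) = _
      exact hPid _ (e.symm (indC0 (I k))).2
    rw [hf, h1]
    simp
  have hgx : ∀ k, g k (x k) = 1 := by
    intro k
    rw [hg, ← hsum1 k]
    refine Finset.sum_congr rfl (fun n hn => ?_)
    rw [hfx, indC0_apply, if_pos hn, mul_one]
  -- weak compactness of the test set
  have hLcpt : IsWeaklyCompact (insert 0 (Set.range x)) := by
    unfold IsWeaklyCompact
    rw [Set.image_insert_eq, ← Set.range_comp]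
    have ht : Tendsto (fun k => toWeakSpace ℝ X (x k)) atTop
        (nhds (toWeakSpace ℝ X 0)) := by
      refine (WeakBilin.tendsto_iff_forall_eval_tendsto (B := (topDualPairing ℝ X).flip) hinj).2 ?_
      intro v
      have := weak_null I hmono
        (v.comp (Y.subtypeL.comp (e.symm : ZeroAtInftyContinuousMap ℕ ℝ →L[ℝ] Y)))
      show Tendsto (fun i => v (x i)) atTop (nhds (v 0))
      rw [map_zero]
      exact this
    exact ht.isCompact_insert_range
  -- contradiction
  obtain ⟨N, hN⟩ := eventually_atTop.1 (hM _ hLcpt 1 one_pos)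
  have := hN N le_rfl (x N) (Set.mem_insert_of_mem _ ⟨N, rfl⟩)
  rw [hgx N, hh0] at this
  norm_num at this
end

section
/- If X is a Banach space with property (K) and the separable complementation property, then X contains no subspace isomorphic to c₀. -/
open NormedSpace Filter

/-- The separable complementation property: every separable subspace is contained in
a complemented separable subspace. -/
def SepComplementationProp (X : Type*) [NormedAddCommGroup X] [NormedSpace ℝ X] : Prop :=
  ∀ S : Submodule ℝ X, TopologicalSpace.IsSeparable (S : Set X) →
    ∃ Z : Submodule ℝ X, S ≤ Z ∧ TopologicalSpace.IsSeparable (Z : Set X) ∧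
      ∃ P : X →L[ℝ] X, (∀ x, P x ∈ Z) ∧ ∀ z ∈ Z, P z = z

open TopologicalSpace

namespace NoC0Aux

/-- The `n`-th standard basis vector of `c₀`. -/
noncomputable def e (n : ℕ) : ZeroAtInftyContinuousMap ℕ ℝ where
  toFun := fun m => if m = n then (1:ℝ) else 0
  continuous_toFun := continuous_of_discreteTopology
  zero_at_infty' := by
    rw [cocompact_eq_cofinite, Nat.cofinite_eq_atTop]
    refine tendsto_const_nhds.congr' ?_
    filter_upwards [eventually_gt_atTop n] with m hm
    simp [(Nat.ne_of_gt hm)]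

lemma e_apply (n m : ℕ) : e n m = if m = n then (1:ℝ) else 0 := rfl

lemma sum_apply (F : Finset ℕ) (f : ℕ → ZeroAtInftyContinuousMap ℕ ℝ) (x : ℕ) :
    (∑ m ∈ F, f m) x = ∑ m ∈ F, f m x := by
  classical
  induction F using Finset.induction with
  | empty => simp
  | insert _ _ h ih =>
    rw [Finset.sum_insert h, Finset.sum_insert h, ← ih]
    simp

lemma combo_apply (F : Finset ℕ) (σ : ℕ → ℝ) (x : ℕ) :
    (∑ m ∈ F, σ m • e m) x = if x ∈ F then σ x else 0 := by
  classical
  rw [sum_apply]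
  have : ∀ m ∈ F, (σ m • e m) x = if m = x then σ m else 0 := by
    intro m _
    simp [e_apply, eq_comm (a := x)]
  rw [Finset.sum_congr rfl this, Finset.sum_ite_eq' F x σ]

lemma abs_apply_le_norm (v : ZeroAtInftyContinuousMap ℕ ℝ) (m : ℕ) : |v m| ≤ ‖v‖ := by
  rw [← ZeroAtInftyContinuousMap.norm_toBCF_eq_norm]
  exact v.toBCF.norm_coe_le_norm m

lemma norm_le_of_forall (v : ZeroAtInftyContinuousMap ℕ ℝ) (C : ℝ) (hC : 0 ≤ C)
    (h : ∀ m, |v m| ≤ C) : ‖v‖ ≤ C := by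
  rw [← ZeroAtInftyContinuousMap.norm_toBCF_eq_norm]
  exact (BoundedContinuousFunction.norm_le hC).mpr h

lemma combo_norm_le (F : Finset ℕ) (σ : ℕ → ℝ) (hσ : ∀ m, |σ m| ≤ 1) :
    ‖∑ m ∈ F, σ m • e m‖ ≤ 1 := by
  refine norm_le_of_forall _ _ zero_le_one fun m => ?_
  rw [combo_apply]
  split
  · exact hσ m
  · simp

lemma tendsto_apply (v : ZeroAtInftyContinuousMap ℕ ℝ) :
    Tendsto (fun m => v m) atTop (nhds 0) := by
  have := zero_at_infty v
  rwa [cocompact_eq_cofinite, Nat.cofinite_eq_atTop] at this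


lemma tendsto_trunc (v : ZeroAtInftyContinuousMap ℕ ℝ) :
    Tendsto (fun N => ∑ m ∈ Finset.range N, v m • e m) atTop (nhds v) := by
  rw [Metric.tendsto_atTop]
  intro ε hε
  obtain ⟨M, hM⟩ := (Metric.tendsto_atTop.mp (tendsto_apply v)) (ε/2) (by linarith)
  refine ⟨M, fun N hN => ?_⟩
  rw [dist_eq_norm]
  have hle : ‖(∑ m ∈ Finset.range N, v m • e m) - v‖ ≤ ε/2 := by
    refine norm_le_of_forall _ _ (by linarith) fun m => ?_
    have : ((∑ m ∈ Finset.range N, v m • e m) - v) m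
        = (if m ∈ Finset.range N then v m else 0) - v m := by
      rw [← combo_apply (Finset.range N) (fun m => v m) m]
      rfl
    rw [this]
    by_cases hm : m ∈ Finset.range N
    · simp [hm]; linarith
    · have hNm : N ≤ m := by simpa using hm
      have hMm : M ≤ m := le_trans hN hNm
      have := hM m hMm
      rw [Real.dist_0_eq_abs] at this
      simp only [hm, if_false, zero_sub, abs_neg]
      linarith
  linarith


section
variable {X : Type*} [NormedAddCommGroup X] [NormedSpace ℝ X]

lemma mem_closure_span (T : ZeroAtInftyContinuousMap ℕ ℝ →L[ℝ] X)
    (v : ZeroAtInftyContinuousMap ℕ ℝ) :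
    T v ∈ closure (Submodule.span ℝ (Set.range fun n => T (e n)) : Set X) := by
  have htr : Tendsto (fun N => T (∑ m ∈ Finset.range N, v m • e m)) atTop (nhds (T v)) :=
    (T.continuous.tendsto v).comp (tendsto_trunc v)
  refine mem_closure_of_tendsto htr (Eventually.of_forall fun N => ?_)
  rw [map_sum]
  refine Submodule.sum_mem _ fun m _ => ?_
  rw [map_smul]
  exact Submodule.smul_mem _ _ (Submodule.subset_span ⟨m, rfl⟩)

lemma summable_abs_coeff (μ : ZeroAtInftyContinuousMap ℕ ℝ →L[ℝ] ℝ) :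
    Summable (fun m => |μ (e m)|) := by
  refine summable_of_sum_range_le (c := ‖μ‖) (fun m => abs_nonneg _) fun N => ?_
  classical
  set σ : ℕ → ℝ := fun m => if 0 ≤ μ (e m) then 1 else -1 with hσdef
  have hσ : ∀ m, |σ m| ≤ 1 := by
    intro m; rw [hσdef]; dsimp only; split <;> simp
  have hval : ∀ m, σ m * μ (e m) = |μ (e m)| := by
    intro m; rw [hσdef]; dsimp only
    split
    · rw [one_mul, abs_of_nonneg ‹_›]
    · rw [neg_one_mul, abs_of_neg (lt_of_not_ge ‹_›)]
  have h1 : ∑ m ∈ Finset.range N, |μ (e m)| = μ (∑ m ∈ Finset.range N, σ m • e m) := by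
    rw [map_sum]
    refine Finset.sum_congr rfl fun m _ => ?_
    rw [map_smul, smul_eq_mul, hval]
  rw [h1]
  calc μ (∑ m ∈ Finset.range N, σ m • e m) ≤ ‖μ (∑ m ∈ Finset.range N, σ m • e m)‖ :=
        le_abs_self _
    _ ≤ ‖μ‖ * ‖∑ m ∈ Finset.range N, σ m • e m‖ := μ.le_opNorm _
    _ ≤ ‖μ‖ * 1 := by
        exact mul_le_mul_of_nonneg_left (combo_norm_le _ _ hσ) (norm_nonneg μ)
    _ = ‖μ‖ := mul_one _

lemma tail_sum_tendsto {g : ℕ → ℝ} (hg : Summable g) (hg0 : ∀ m, 0 ≤ g m)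
    (N : ℕ → Finset ℕ) (hN : ∀ k, ∀ m ∈ N k, k ≤ m) :
    Tendsto (fun k => ∑ m ∈ N k, g m) atTop (nhds 0) := by
  have htail : Tendsto (fun k => ∑' i, g (i + k)) atTop (nhds 0) := tendsto_sum_nat_add g
  refine squeeze_zero (fun k => Finset.sum_nonneg fun m _ => hg0 m) (fun k => ?_) htail
  classical
  have hinj : ∀ x ∈ N k, ∀ y ∈ N k, x - k = y - k → x = y := by
    intro x hx y hy hxy
    have := hN k x hx; have := hN k y hy; omega
  have h1 : ∑ i ∈ (N k).image (· - k), g (i + k) = ∑ m ∈ N k, g (m - k + k) :=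
    Finset.sum_image hinj
  have h2 : ∑ m ∈ N k, g (m - k + k) = ∑ m ∈ N k, g m := by
    refine Finset.sum_congr rfl fun m hm => ?_
    rw [Nat.sub_add_cancel (hN k m hm)]
  rw [← h2, ← h1]
  exact Summable.sum_le_tsum _ (fun i _ => hg0 _) ((summable_nat_add_iff k).mpr hg)
end
section
variable {X : Type*} [NormedAddCommGroup X] [NormedSpace ℝ X]

/-- The coordinate evaluation as a linear map on c₀. -/
def evalLM (m : ℕ) : ZeroAtInftyContinuousMap ℕ ℝ →ₗ[ℝ] ℝ where
  toFun := fun v => v m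
  map_add' := fun v w => rfl
  map_smul' := fun r v => rfl

lemma exists_phi (T : ZeroAtInftyContinuousMap ℕ ℝ →L[ℝ] X) {c : ℝ} (hc : 0 < c)
    (hTlb : ∀ v, c * ‖v‖ ≤ ‖T v‖) (hinj : Function.Injective T) (m : ℕ) :
    ∃ φ : StrongDual ℝ X, (∀ v, φ (T v) = v m) ∧ ‖φ‖ ≤ 1/c := by
  have hinj' : Function.Injective (T : ZeroAtInftyContinuousMap ℕ ℝ →ₗ[ℝ] X) := hinj
  set p : Subspace ℝ X := LinearMap.range (T : ZeroAtInftyContinuousMap ℕ ℝ →ₗ[ℝ] X) with hp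
  set Eq := LinearEquiv.ofInjective (T : ZeroAtInftyContinuousMap ℕ ℝ →ₗ[ℝ] X) hinj' with hEqdef
  have hEq : ∀ v, Eq v = (⟨T v, LinearMap.mem_range_self _ v⟩ : p) := by
    intro v; exact Subtype.ext (LinearEquiv.ofInjective_apply _ v)
  set lm : p →ₗ[ℝ] ℝ := (evalLM m).comp Eq.symm.toLinearMap with hlm
  have hbound : ∀ x : p, ‖lm x‖ ≤ (1/c) * ‖x‖ := by
    intro x
    set v := Eq.symm x with hv
    have hTv : T v = (x : X) := by
      have h : Eq v = x := Eq.apply_symm_apply x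
      rw [hEq v] at h
      exact congrArg Subtype.val h
    have h1 : ‖lm x‖ = |v m| := rfl
    have h2 : |v m| ≤ ‖v‖ := abs_apply_le_norm v m
    have h3 : c * ‖v‖ ≤ ‖T v‖ := hTlb v
    have h4 : ‖(x : p)‖ = ‖(x : X)‖ := rfl
    rw [h1, h4, ← hTv, one_div_mul_eq_div, le_div_iff₀ hc]
    nlinarith [norm_nonneg v, abs_nonneg (v m)]
  set L : p →L[ℝ] ℝ := LinearMap.mkContinuous lm (1/c) hbound with hL
  obtain ⟨φ, hext, hnorm⟩ := exists_extension_norm_eq p L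
  refine ⟨φ, fun v => ?_, ?_⟩
  · have := hext ⟨T v, LinearMap.mem_range_self _ v⟩
    rw [this]
    show lm _ = v m
    rw [hlm]
    have : Eq.symm ⟨T v, LinearMap.mem_range_self _ v⟩ = v := by
      rw [LinearEquiv.symm_apply_eq, hEq]
    simp only [LinearMap.comp_apply, LinearEquiv.coe_toLinearMap, this]
    rfl
  · rw [hnorm]
    exact LinearMap.mkContinuous_norm_le lm (by positivity) hbound
end
section
variable {X : Type*} [NormedAddCommGroup X] [NormedSpace ℝ X]

lemma pairing_injective :
    Function.Injective ⇑(topDualPairing ℝ X).flip := by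
  intro x x' hxx'
  have h : ∀ φ : StrongDual ℝ X, φ x = φ x' := fun φ => congrArg (fun ψ => ψ φ) hxx'
  have : ∀ φ : StrongDual ℝ X, φ (x - x') = 0 := by
    intro φ; rw [map_sub, h φ, sub_self]
  have := NormedSpace.eq_zero_of_forall_dual_eq_zero ℝ this
  exact sub_eq_zero.mp this

lemma isWeaklyCompact_singleton (x : X) : IsWeaklyCompact ({x} : Set X) := by
  rw [IsWeaklyCompact, Set.image_singleton]
  exact isCompact_singleton

lemma isWeaklyCompact_insert_range {xs : ℕ → X}
    (h : ∀ φ : StrongDual ℝ X, Tendsto (fun k => φ (xs k)) atTop (nhds 0)) :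
    IsWeaklyCompact (insert (0 : X) (Set.range xs)) := by
  rw [IsWeaklyCompact, Set.image_insert_eq, ← Set.range_comp]
  have h0 : toWeakSpace ℝ X (0 : X) = 0 := map_zero _
  rw [h0]
  refine Filter.Tendsto.isCompact_insert_range ?_
  refine (WeakBilin.tendsto_iff_forall_eval_tendsto (topDualPairing ℝ X).flip pairing_injective).mpr ?_
  intro φ
  have : ∀ k, ((topDualPairing ℝ X).flip ((toWeakSpace ℝ X ∘ xs) k)) φ = φ (xs k) := fun k => rfl
  simp only [this, map_zero, LinearMap.zero_apply]
  exact (h φ).mono_right (le_of_eq (congrArg nhds (map_zero φ).symm))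

end

end NoC0Aux

open NoC0Aux

theorem propertyK_scp_no_c0 (X : Type*) [NormedAddCommGroup X]
    [NormedSpace ℝ X] [CompleteSpace X] (hK : PropertyK X)
    (hscp : SepComplementationProp X) :
    ¬ ∃ (T : ZeroAtInftyContinuousMap ℕ ℝ →L[ℝ] X) (c : ℝ), 0 < c ∧
      ∀ v, c * ‖v‖ ≤ ‖T v‖ := by
  rintro ⟨T, c, hc, hTlb⟩
  classical
  -- T is injective
  have hinj : Function.Injective T := by
    intro u w huw
    have h1 : c * ‖u - w‖ ≤ ‖T (u - w)‖ := hTlb _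
    rw [map_sub, huw, sub_self, norm_zero] at h1
    have h0 : ‖u - w‖ = 0 := by nlinarith [norm_nonneg (u - w)]
    exact sub_eq_zero.mp (norm_eq_zero.mp h0)
  -- the separable subspace generated by the image of the basis
  set S : Submodule ℝ X := Submodule.span ℝ (Set.range fun n => T (e n)) with hS
  have hSsep : IsSeparable (S : Set X) :=
    (Set.countable_range fun n => T (e n)).isSeparable.span
  obtain ⟨Z, hSZ, hZsep, P, hPmem, hPfix⟩ := hscp S hSsep
  -- P fixes the closure of Z, in particular the range of T
  have hPT : ∀ v, P (T v) = T v := by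
    intro v
    have hclos : Set.EqOn (⇑P) id (closure (Z : Set X)) :=
      (Set.EqOn.closure (fun z hz => hPfix z hz) P.continuous continuous_id)
    have hmem : T v ∈ closure (Z : Set X) :=
      closure_mono (show (S : Set X) ⊆ (Z : Set X) from hSZ) (mem_closure_span T v)
    exact hclos hmem
  -- Hahn-Banach extensions of the coordinate functionals
  choose φ hφT hφn using fun m => exists_phi T hc hTlb hinj m
  -- countable dense subset of Z
  obtain ⟨D, hDc, hZD⟩ := hZsep
  obtain ⟨d, hd⟩ := ((hDc.insert (0:X)).exists_eq_range (Set.insert_nonempty _ _))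
  have hZd : (Z : Set X) ⊆ closure (Set.range d) := by
    refine hZD.trans (closure_mono ?_)
    rw [← hd]
    exact Set.subset_insert _ _
  -- diagonal argument: a pointwise convergent subsequence on the d i's
  set K : Set (ℕ → ℝ) := Set.univ.pi fun i => Metric.closedBall 0 (1/c * ‖d i‖) with hKdef
  have hKc : IsCompact K := isCompact_univ_pi fun i => isCompact_closedBall _ _
  have hmemK : ∀ m, (fun i => φ m (d i)) ∈ K := by
    intro m
    rw [hKdef, Set.mem_univ_pi]
    intro i
    rw [Metric.mem_closedBall, Real.dist_eq, sub_zero]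
    calc |φ m (d i)| ≤ ‖φ m‖ * ‖d i‖ := (φ m).le_opNorm _
      _ ≤ 1/c * ‖d i‖ := mul_le_mul_of_nonneg_right (hφn m) (norm_nonneg _)
  obtain ⟨A, -, n, hn, hnA⟩ := hKc.tendsto_subseq hmemK
  have hptD : ∀ i, Tendsto (fun j => φ (n j) (d i)) atTop (nhds (A i)) := by
    intro i
    exact (tendsto_pi_nhds.mp hnA) i
  -- Cauchy on the closure of the range of d
  have hCauchy : ∀ x ∈ closure (Set.range d), CauchySeq (fun j => φ (n j) x) := by
    intro x hx
    rw [Metric.cauchySeq_iff]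
    intro ε hε
    have hc4 : 0 < ε * c / 4 := by positivity
    obtain ⟨p, hpmem, hpx⟩ := Metric.mem_closure_iff.mp hx _ hc4
    obtain ⟨i, hi⟩ := hpmem
    have hci : CauchySeq (fun j => φ (n j) (d i)) := (hptD i).cauchySeq
    obtain ⟨N, hN⟩ := Metric.cauchySeq_iff.mp hci (ε/2) (by linarith)
    refine ⟨N, fun j hj j' hj' => ?_⟩
    have hb : ∀ j : ℕ, dist (φ (n j) x) (φ (n j) (d i)) ≤ ε/4 := by
      intro j
      rw [Real.dist_eq, ← map_sub]
      have h1 : |φ (n j) (x - d i)| ≤ ‖φ (n j)‖ * ‖x - d i‖ := (φ (n j)).le_opNorm _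
      have h2 : ‖x - d i‖ ≤ ε * c / 4 := by
        rw [← dist_eq_norm]
        rw [← hi] at hpx
        exact le_of_lt hpx
      have h3 : ‖φ (n j)‖ * ‖x - d i‖ ≤ 1/c * (ε * c / 4) :=
        mul_le_mul (hφn _) h2 (norm_nonneg _) (by positivity)
      have h4 : 1/c * (ε * c / 4) = ε/4 := by field_simp
      linarith
    calc dist (φ (n j) x) (φ (n j') x)
        ≤ dist (φ (n j) x) (φ (n j) (d i)) + dist (φ (n j) (d i)) (φ (n j') (d i))
            + dist (φ (n j') (d i)) (φ (n j') x) := dist_triangle4 _ _ _ _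
      _ < ε/4 + ε/2 + ε/4 := by
          have := hN j hj j' hj'
          have h5 := hb j
          have h6 := hb j'
          rw [dist_comm (φ (n j') (d i)) (φ (n j') x)] at *
          linarith [hb j, hb j']
      _ = ε := by ring
  -- pointwise limit functional
  have hconv : ∀ x : X, ∃ l, Tendsto (fun j => φ (n j) (P x)) atTop (nhds l) :=
    fun x => cauchySeq_tendsto_of_complete (hCauchy (P x) (hZd (hPmem x)))
  choose G hG using hconv
  have hGadd : ∀ x y : X, G (x + y) = G x + G y := by
    intro x y
    refine tendsto_nhds_unique (hG (x + y)) ?_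
    have := (hG x).add (hG y)
    refine this.congr fun j => ?_
    rw [← map_add, ← map_add]
  have hGsmul : ∀ (r : ℝ) (x : X), G (r • x) = r • G x := by
    intro r x
    refine tendsto_nhds_unique (hG (r • x)) ?_
    have := (hG x).const_mul r
    refine this.congr fun j => ?_
    rw [map_smul, map_smul, smul_eq_mul]
  have hGb : ∀ x : X, ‖G x‖ ≤ (1/c * ‖P‖) * ‖x‖ := by
    intro x
    refine le_of_tendsto (hG x).norm (Eventually.of_forall fun j => ?_)
    calc ‖φ (n j) (P x)‖ ≤ ‖φ (n j)‖ * ‖P x‖ := (φ (n j)).le_opNorm _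
      _ ≤ 1/c * (‖P‖ * ‖x‖) :=
          mul_le_mul (hφn _) (P.le_opNorm x) (norm_nonneg _) (by positivity)
      _ = (1/c * ‖P‖) * ‖x‖ := by ring
  set gLM : X →ₗ[ℝ] ℝ :=
    { toFun := G, map_add' := hGadd, map_smul' := hGsmul } with hgLM
  set g : StrongDual ℝ X := LinearMap.mkContinuous gLM (1/c * ‖P‖) hGb with hgdef
  have hgx : ∀ x, g x = G x := fun x => rfl
  set F : ℕ → StrongDual ℝ X := fun j => (φ (n j)).comp P with hFdef
  have hFx : ∀ j x, F j x = φ (n j) (P x) := fun j x => rfl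
  have hFg : WStarTendsto F g := by
    intro x
    simpa [hFx, hgx] using hG x
  obtain ⟨y, h, ⟨I, a, hIne, hIlt, ha0, ha1, hy⟩, hM⟩ := hK F g hFg
  -- elements of I k are at least k
  have hIk : ∀ k, ∀ j, j ∈ I k → k ≤ j := by
    intro k
    induction k with
    | zero => exact fun j _ => Nat.zero_le j
    | succ k ih =>
      intro j hj
      obtain ⟨m, hm⟩ := hIne k
      exact Nat.succ_le_of_lt (lt_of_le_of_lt (ih m hm) (hIlt k m j hm hj))
  -- y k converges pointwise to g
  have hyg : ∀ x : X, Tendsto (fun k => y k x) atTop (nhds (g x)) := by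
    intro x
    rw [Metric.tendsto_atTop]
    intro ε hε
    obtain ⟨N, hN⟩ := Metric.tendsto_atTop.mp (hFg x) (ε/2) (by linarith)
    refine ⟨N, fun k hk => ?_⟩
    rw [Real.dist_eq]
    have hdiff : y k x - g x = ∑ j ∈ I k, a j * (F j x - g x) := by
      rw [hy k]
      have h1 : (∑ j ∈ I k, a j • F j) x = ∑ j ∈ I k, a j * F j x := by
        rw [ContinuousLinearMap.sum_apply]
        exact Finset.sum_congr rfl fun j _ => rfl
      rw [h1]
      calc (∑ j ∈ I k, a j * F j x) - g x
          = (∑ j ∈ I k, a j * F j x) - (∑ j ∈ I k, a j) * g x := by rw [ha1 k, one_mul]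
        _ = ∑ j ∈ I k, (a j * F j x - a j * g x) := by
            rw [Finset.sum_mul, Finset.sum_sub_distrib]
        _ = ∑ j ∈ I k, a j * (F j x - g x) := Finset.sum_congr rfl fun j _ => by ring
    have hbound : |y k x - g x| ≤ ε/2 := by
      rw [hdiff]
      calc |∑ j ∈ I k, a j * (F j x - g x)| ≤ ∑ j ∈ I k, |a j * (F j x - g x)| :=
            Finset.abs_sum_le_sum_abs _ _
        _ ≤ ∑ j ∈ I k, a j * (ε/2) := by
            refine Finset.sum_le_sum fun j hj => ?_
            rw [abs_mul, abs_of_nonneg (ha0 j)]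
            refine mul_le_mul_of_nonneg_left ?_ (ha0 j)
            have hj2 := hN j (le_trans hk (hIk k j hj))
            rw [Real.dist_eq] at hj2
            exact le_of_lt hj2
        _ = ε/2 := by rw [← Finset.sum_mul, ha1 k, one_mul]
    linarith
  -- y k converges pointwise to h as well, hence h = g pointwise
  have hhx : ∀ x : X, h x = g x := by
    intro x
    refine tendsto_nhds_unique ?_ (hyg x)
    rw [Metric.tendsto_atTop]
    intro ε hε
    obtain ⟨N, hN⟩ := eventually_atTop.mp (hM {x} (isWeaklyCompact_singleton x) ε hε)
    refine ⟨N, fun k hk => ?_⟩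
    rw [Real.dist_eq]
    exact hN k hk x rfl
  -- g vanishes on the range of T
  have hgT : ∀ v, g (T v) = 0 := by
    intro v
    have h1 : Tendsto (fun j => φ (n j) (P (T v))) atTop (nhds (g (T v))) := hG (T v)
    have h2 : Tendsto (fun j => φ (n j) (P (T v))) atTop (nhds 0) := by
      have hv0 : Tendsto (fun j => v (n j)) atTop (nhds 0) :=
        (tendsto_apply v).comp hn.tendsto_atTop
      refine hv0.congr fun j => ?_
      rw [hPT v, hφT (n j) v]
    exact tendsto_nhds_unique h1 h2
  -- the indicator vectors
  set s : ℕ → ZeroAtInftyContinuousMap ℕ ℝ := fun k => ∑ j ∈ I k, e (n j) with hsdef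
  have hsk : ∀ k, ∀ j ∈ I k, s k (n j) = 1 := by
    intro k j hj
    rw [hsdef]
    dsimp only
    rw [sum_apply]
    have hterm : ∀ j' ∈ I k, e (n j') (n j) = if j' = j then (1:ℝ) else 0 := by
      intro j' _
      rw [e_apply]
      by_cases hjj : j' = j
      · simp [hjj]
      · have hne : n j ≠ n j' := fun hh => hjj (hn.injective hh.symm)
        simp [hjj, hne]
    rw [Finset.sum_congr rfl hterm, Finset.sum_ite_eq' (I k) j fun _ => (1:ℝ), if_pos hj]
  -- y k evaluated at T (s k) equals 1
  have hyk1 : ∀ k, y k (T (s k)) = 1 := by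
    intro k
    rw [hy k, ContinuousLinearMap.sum_apply]
    have hterm : ∀ j ∈ I k, (a j • F j) (T (s k)) = a j := by
      intro j hj
      rw [ContinuousLinearMap.smul_apply, smul_eq_mul]
      have hF1 : F j (T (s k)) = 1 := by
        rw [hFx, hPT, hφT]
        exact hsk k j hj
      rw [hF1, mul_one]
    rw [Finset.sum_congr rfl hterm, ha1 k]
  -- T (s k) tends weakly to 0
  have hws : ∀ ψ : StrongDual ℝ X, Tendsto (fun k => ψ (T (s k))) atTop (nhds 0) := by
    intro ψ
    set μ : ZeroAtInftyContinuousMap ℕ ℝ →L[ℝ] ℝ := ψ.comp T with hμ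
    have heq : ∀ k, ψ (T (s k)) = ∑ m ∈ (I k).image n, μ (e m) := by
      intro k
      rw [Finset.sum_image (fun x _ y _ hxy => hn.injective hxy)]
      rw [hsdef]
      dsimp only
      rw [map_sum, map_sum]
      rfl
    have habs : Tendsto (fun k => ∑ m ∈ (I k).image n, |μ (e m)|) atTop (nhds 0) := by
      refine tail_sum_tendsto (summable_abs_coeff μ) (fun m => abs_nonneg _)
        (fun k => (I k).image n) (fun k m hm => ?_)
      obtain ⟨j, hj, rfl⟩ := Finset.mem_image.mp hm
      exact le_trans (hIk k j hj) (hn.le_apply)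
    refine squeeze_zero_norm (fun k => ?_) habs
    rw [heq k]
    exact Finset.abs_sum_le_sum_abs _ _
  -- the weakly compact set
  have hwk : IsWeaklyCompact (insert (0 : X) (Set.range fun k => T (s k))) :=
    isWeaklyCompact_insert_range hws
  -- final contradiction
  obtain ⟨N, hN⟩ := eventually_atTop.mp (hM _ hwk 1 one_pos)
  have hcontr := hN N le_rfl (T (s N)) (Set.mem_insert_of_mem _ ⟨N, rfl⟩)
  rw [hyk1 N, hhx (T (s N)), hgT (s N), sub_zero] at hcontr
  norm_num at hcontr
end

section
/- Let κ < 𝔭 be a cardinal, let 𝒮 be a set of linearly independent sequences in a real vector space, and for each α < κ let 𝒮_α ⊆ 𝒮 satisfy: (i) if (g_n) ∈ 𝒮_α and (h_n) is eventually a rational convex block subsequence of (g_n), then (h_n) ∈ 𝒮_α; (ii) every sequence in 𝒮 admits a rational convex block subsequence in 𝒮_α. Then every sequence of 𝒮 admits a rational convex block subsequence belonging to ⋂_{α<κ} 𝒮_α. -/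
open NormedSpace Filter

/-- The pseudo-intersection number 𝔭. -/
noncomputable def pseudoIntersectionNumber : Cardinal :=
  sInf { c : Cardinal | ∃ M : Set (Set ℕ),
    (∀ A ∈ M, A.Infinite) ∧
    (∀ F : Finset (Set ℕ), ↑F ⊆ M → Set.Infinite (⋂ A ∈ F, A)) ∧
    (¬ ∃ A : Set ℕ, A.Infinite ∧ ∀ B ∈ M, (A \ B).Finite) ∧
    Cardinal.mk M = c }

/-- `y` is a rational convex block subsequence of `x`. -/
def IsRatConvexBlock {E : Type*} [AddCommGroup E] [Module ℝ E] (x y : ℕ → E) : Prop :=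
  ∃ (I : ℕ → Finset ℕ) (a : ℕ → ℝ),
    (∀ k, (I k).Nonempty) ∧
    (∀ k m mm, m ∈ I k → mm ∈ I (k + 1) → m < mm) ∧
    (∀ n, 0 ≤ a n) ∧
    (∀ n, ∃ q : ℚ, a n = (q : ℝ)) ∧
    (∀ k, ∑ n ∈ I k, a n = 1) ∧
    (∀ k, y k = ∑ n ∈ I k, a n • x n)

/-- `y ⪯ x`: `y` is eventually a rational convex block subsequence of `x`. -/
def EvRatConvexBlock {E : Type*} [AddCommGroup E] [Module ℝ E] (x y : ℕ → E) : Prop :=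
  ∃ n₀ : ℕ, IsRatConvexBlock x (fun k => y (k + n₀))

section Aux
variable {E : Type*} [AddCommGroup E] [Module ℝ E]

lemma succ_mono {I : ℕ → Finset ℕ} (hne : ∀ k, (I k).Nonempty)
    (hsucc : ∀ k, ∀ m ∈ I k, ∀ m' ∈ I (k + 1), m < m') :
    ∀ {k k' : ℕ}, k < k' → ∀ m ∈ I k, ∀ m' ∈ I k', m < m' := by
  intro k k' h
  induction k' with
  | zero => omega
  | succ n ih =>
    intro m hm m' hm'
    rcases Nat.lt_succ_iff_lt_or_eq.mp h with h' | h'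
    · obtain ⟨x, hx⟩ := hne n
      exact lt_trans (ih h' m hm x hx) (hsucc n x hx m' hm')
    · subst h'; exact hsucc k m hm m' hm'

lemma succ_le {I : ℕ → Finset ℕ} (hne : ∀ k, (I k).Nonempty)
    (hsucc : ∀ k, ∀ m ∈ I k, ∀ m' ∈ I (k + 1), m < m') :
    ∀ k, ∀ m ∈ I k, k ≤ m := by
  intro k
  induction k with
  | zero => intro m _; exact Nat.zero_le m
  | succ n ih =>
    intro m hm
    obtain ⟨x, hx⟩ := hne n
    have h1 := hsucc n x hx m hm
    have h2 := ih x hx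
    omega

/-- value of a rational finsupp as a combination of `f` -/
noncomputable def blkVal (f : ℕ → E) (c : ℕ →₀ ℚ) : E := ∑ n ∈ c.support, (c n : ℝ) • f n

def IsBlk (c : ℕ →₀ ℚ) : Prop := (∀ n, 0 ≤ c n) ∧ ∑ n ∈ c.support, c n = 1

lemma IsBlk.nonempty {c : ℕ →₀ ℚ} (h : IsBlk c) : c.support.Nonempty := by
  rcases Finset.eq_empty_or_nonempty c.support with h' | h'
  · exfalso; have h2 := h.2; rw [h'] at h2; simp at h2
  · exact h'

/-- block sequence structure over `f` with values `y` -/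
def BlkSeq (f : ℕ → E) (c : ℕ → (ℕ →₀ ℚ)) (y : ℕ → E) : Prop :=
  (∀ k, IsBlk (c k)) ∧
  (∀ k, ∀ m ∈ (c k).support, ∀ m' ∈ (c (k + 1)).support, m < m') ∧
  (∀ k, y k = blkVal f (c k))

lemma BlkSeq.mono {f : ℕ → E} {c y} (h : BlkSeq f c y) :
    ∀ {k k' : ℕ}, k < k' → ∀ m ∈ (c k).support, ∀ m' ∈ (c k').support, m < m' :=
  succ_mono (fun k => (h.1 k).nonempty) h.2.1

lemma BlkSeq.le_of_mem {f : ℕ → E} {c y} (h : BlkSeq f c y) :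
    ∀ k, ∀ m ∈ (c k).support, k ≤ m :=
  succ_le (fun k => (h.1 k).nonempty) h.2.1

lemma blkVal_eq_sum {f : ℕ → E} {c : ℕ →₀ ℚ} {s : Finset ℕ} (hs : c.support ⊆ s) :
    blkVal f c = ∑ n ∈ s, (c n : ℝ) • f n := by
  unfold blkVal
  refine Finset.sum_subset hs ?_
  intro n _ hn
  simp [Finsupp.notMem_support_iff.mp hn]

lemma blk_sum_eq {c : ℕ →₀ ℚ} {s : Finset ℕ} (hs : c.support ⊆ s) :
    ∑ n ∈ s, c n = ∑ n ∈ c.support, c n :=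
  (Finset.sum_subset hs (by intro n _ hn; exact Finsupp.notMem_support_iff.mp hn)).symm

lemma combo_apply (K : Finset ℕ) (b : ℕ → ℚ) (c : ℕ → (ℕ →₀ ℚ)) (n : ℕ) :
    (∑ j ∈ K, b j • c j) n = ∑ j ∈ K, b j * (c j) n := by
  rw [Finsupp.finset_sum_apply]
  simp [Finsupp.smul_apply]

lemma combo_support_subset (K : Finset ℕ) (b : ℕ → ℚ) (c : ℕ → (ℕ →₀ ℚ)) :
    (∑ j ∈ K, b j • c j).support ⊆ K.biUnion fun j => (c j).support := by
  intro n hn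
  rw [Finsupp.mem_support_iff, combo_apply] at hn
  obtain ⟨j, hj, hne⟩ := Finset.exists_ne_zero_of_sum_ne_zero hn
  exact Finset.mem_biUnion.mpr ⟨j, hj, Finsupp.mem_support_iff.mpr (by
    intro h0; rw [h0, mul_zero] at hne; exact hne rfl)⟩

lemma combo_support_supset {K : Finset ℕ} {b : ℕ → ℚ} {c : ℕ → (ℕ →₀ ℚ)}
    (hb : ∀ j ∈ K, 0 ≤ b j) (hc : ∀ j ∈ K, IsBlk (c j))
    {j : ℕ} (hj : j ∈ K) (hbj : 0 < b j) :
    (c j).support ⊆ (∑ j ∈ K, b j • c j).support := by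
  intro n hn
  rw [Finsupp.mem_support_iff, combo_apply]
  have hpos : 0 < b j * (c j) n := by
    have h1 : 0 < (c j) n := lt_of_le_of_ne ((hc j hj).1 n) (Ne.symm (Finsupp.mem_support_iff.mp hn))
    exact mul_pos hbj h1
  have : 0 < ∑ j ∈ K, b j * (c j) n := by
    refine Finset.sum_pos' ?_ ⟨j, hj, hpos⟩
    intro i hi
    exact mul_nonneg (hb i hi) ((hc i hi).1 n)
  exact ne_of_gt this

lemma combo_isBlk {K : Finset ℕ} {b : ℕ → ℚ} {c : ℕ → (ℕ →₀ ℚ)}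
    (hb : ∀ j ∈ K, 0 ≤ b j) (hsum : ∑ j ∈ K, b j = 1) (hc : ∀ j ∈ K, IsBlk (c j)) :
    IsBlk (∑ j ∈ K, b j • c j) := by
  constructor
  · intro n
    rw [combo_apply]
    exact Finset.sum_nonneg fun i hi => mul_nonneg (hb i hi) ((hc i hi).1 n)
  · rw [blk_sum_eq (combo_support_subset K b c) |>.symm]
    have : ∀ n ∈ K.biUnion fun j => (c j).support,
        (∑ j ∈ K, b j • c j) n = ∑ j ∈ K, b j * (c j) n := fun n _ => combo_apply K b c n
    rw [Finset.sum_congr rfl this, Finset.sum_comm]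
    have : ∀ j ∈ K, ∑ n ∈ (K.biUnion fun j => (c j).support), b j * (c j) n = b j := by
      intro j hj
      rw [← Finset.mul_sum]
      rw [blk_sum_eq (c := c j) (s := K.biUnion fun j => (c j).support)
        (Finset.subset_biUnion_of_mem (fun j => (c j).support) hj), (hc j hj).2, mul_one]
    rw [Finset.sum_congr rfl this, hsum]

lemma blkVal_combo (f : ℕ → E) (K : Finset ℕ) (b : ℕ → ℚ) (c : ℕ → (ℕ →₀ ℚ)) :
    blkVal f (∑ j ∈ K, b j • c j) = ∑ j ∈ K, (b j : ℝ) • blkVal f (c j) := by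
  classical
  set s := (∑ j ∈ K, b j • c j).support ∪ K.biUnion fun j => (c j).support with hs
  rw [blkVal_eq_sum (f := f) (s := s) Finset.subset_union_left]
  calc ∑ n ∈ s, ((∑ j ∈ K, b j • c j) n : ℝ) • f n
      = ∑ n ∈ s, ∑ j ∈ K, ((b j : ℝ) * ((c j) n : ℝ)) • f n := by
        refine Finset.sum_congr rfl fun n _ => ?_
        rw [combo_apply]
        push_cast
        rw [Finset.sum_smul]
    _ = ∑ j ∈ K, ∑ n ∈ s, ((b j : ℝ) * ((c j) n : ℝ)) • f n := Finset.sum_comm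
    _ = ∑ j ∈ K, (b j : ℝ) • blkVal f (c j) := by
        refine Finset.sum_congr rfl fun j hj => ?_
        rw [blkVal_eq_sum (f := f) (s := s)
          (fun n hn => Finset.mem_union_right _ (Finset.mem_biUnion.mpr ⟨j, hj, hn⟩))]
        rw [Finset.smul_sum]
        exact Finset.sum_congr rfl fun n _ => by rw [mul_smul]

end Aux

section Aux2
variable {E : Type*} [AddCommGroup E] [Module ℝ E]

lemma ratBlock_iff {f y : ℕ → E} : IsRatConvexBlock f y ↔ ∃ c, BlkSeq f c y := by
  classical
  constructor
  · rintro ⟨I, a, hne, hsucc, hpos, hrat, hsum, hval⟩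
    choose qa hqa using hrat
    set c : ℕ → (ℕ →₀ ℚ) := fun k => Finsupp.onFinset (I k) (fun n => if n ∈ I k then qa n else 0)
      (fun n h => by by_contra hc; simp [hc] at h) with hc
    have happ : ∀ k n, (c k) n = if n ∈ I k then qa n else 0 := fun k n => rfl
    have hsupp : ∀ k, (c k).support ⊆ I k := fun k => Finsupp.support_onFinset_subset
    have hIsum : ∀ k, ∑ n ∈ I k, (c k) n = 1 := by
      intro k
      have : ((∑ n ∈ I k, (c k) n : ℚ) : ℝ) = 1 := by
        push_cast
        rw [← hsum k]
        refine Finset.sum_congr rfl fun n hn => ?_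
        rw [happ, if_pos hn, ← hqa n]
      exact_mod_cast this
    refine ⟨c, fun k => ⟨?_, ?_⟩, ?_, ?_⟩
    · intro n
      rw [happ]
      split_ifs with h
      · have h2 := hpos n; rw [hqa n] at h2; exact_mod_cast h2
      · exact le_refl 0
    · rw [← blk_sum_eq (hsupp k)]; exact hIsum k
    · intro k m hm m' hm'
      exact hsucc k m m' (hsupp k hm) (hsupp (k + 1) hm')
    · intro k
      rw [blkVal_eq_sum (hsupp k), hval k]
      refine Finset.sum_congr rfl fun n hn => ?_
      rw [happ, if_pos hn, ← hqa n]
  · rintro ⟨c, hblk, hsucc, hval⟩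
    have hne : ∀ k, (c k).support.Nonempty := fun k => (hblk k).nonempty
    have hmono : ∀ {k k' : ℕ}, k < k' → ∀ m ∈ (c k).support, ∀ m' ∈ (c k').support, m < m' :=
      succ_mono hne hsucc
    set a : ℕ → ℝ := fun n => if h : ∃ k, n ∈ (c k).support then ((c h.choose) n : ℝ) else 0
      with ha
    have haux : ∀ k n, n ∈ (c k).support → a n = ((c k) n : ℝ) := by
      intro k n hn
      have hex : ∃ k, n ∈ (c k).support := ⟨k, hn⟩
      rw [ha]
      simp only [dif_pos hex]
      rcases lt_trichotomy hex.choose k with h | h | h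
      · exact absurd (hmono h n hex.choose_spec n hn) (lt_irrefl n)
      · rw [h]
      · exact absurd (hmono h n hn n hex.choose_spec) (lt_irrefl n)
    have h0 : ∀ n, (¬ ∃ k, n ∈ (c k).support) → a n = 0 := by
      intro n h
      rw [ha]
      exact dif_neg h
    refine ⟨fun k => (c k).support, a, hne, fun k m mm hm hmm => hsucc k m hm mm hmm,
      ?_, ?_, ?_, ?_⟩
    · intro n
      by_cases h : ∃ k, n ∈ (c k).support
      · rw [haux h.choose n h.choose_spec]
        exact_mod_cast (hblk h.choose).1 n
      · rw [h0 n h]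
    · intro n
      by_cases h : ∃ k, n ∈ (c k).support
      · exact ⟨(c h.choose) n, haux h.choose n h.choose_spec⟩
      · exact ⟨0, by rw [h0 n h]; norm_num⟩
    · intro k
      rw [Finset.sum_congr rfl fun n hn => haux k n hn]
      exact_mod_cast (hblk k).2
    · intro k
      rw [hval k]
      unfold blkVal
      exact Finset.sum_congr rfl fun n hn => by rw [haux k n hn]

lemma ratBlock_shift_self (y : ℕ → E) (n₀ : ℕ) :
    IsRatConvexBlock y (fun k => y (k + n₀)) := by
  refine ⟨fun k => {k + n₀}, fun _ => 1, fun k => ⟨k + n₀, Finset.mem_singleton_self _⟩,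
    ?_, fun n => zero_le_one, fun n => ⟨1, by norm_num⟩, by simp, by simp⟩
  intro k m mm hm hmm
  rw [Finset.mem_singleton] at hm hmm
  omega

lemma ratBlock_refl (y : ℕ → E) : IsRatConvexBlock y y := ratBlock_shift_self y 0

lemma evRatBlock_refl (y : ℕ → E) : EvRatConvexBlock y y := ⟨0, ratBlock_shift_self y 0⟩

lemma evRatBlock_of_ratBlock {x y : ℕ → E} (h : IsRatConvexBlock x y) :
    EvRatConvexBlock x y := ⟨0, h⟩

lemma ratBlock_trans {f g y : ℕ → E} (hfg : IsRatConvexBlock f g)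
    (hgy : IsRatConvexBlock g y) : IsRatConvexBlock f y := by
  classical
  obtain ⟨c, hc⟩ := ratBlock_iff.mp hfg
  obtain ⟨d, hd⟩ := ratBlock_iff.mp hgy
  refine ratBlock_iff.mpr ⟨fun k => ∑ j ∈ (d k).support, (d k) j • c j, ?_, ?_, ?_⟩
  · intro k
    exact combo_isBlk (fun j _ => (hd.1 k).1 j) (hd.1 k).2 (fun j _ => hc.1 j)
  · intro k m hm m' hm'
    have hm2 := combo_support_subset _ _ _ hm
    have hm'2 := combo_support_subset _ _ _ hm'
    rw [Finset.mem_biUnion] at hm2 hm'2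
    obtain ⟨j, hj, hmj⟩ := hm2
    obtain ⟨j', hj', hmj'⟩ := hm'2
    exact hc.mono (hd.2.1 k j hj j' hj') m hmj m' hmj'
  · intro k
    calc y k = blkVal g (d k) := hd.2.2 k
      _ = ∑ j ∈ (d k).support, ((d k) j : ℝ) • g j := rfl
      _ = ∑ j ∈ (d k).support, ((d k) j : ℝ) • blkVal f (c j) :=
          Finset.sum_congr rfl fun j _ => by rw [hc.2.2 j]
      _ = blkVal f (∑ j ∈ (d k).support, (d k) j • c j) :=
          (blkVal_combo f (d k).support (d k) c).symm

lemma ratBlock_tail {f y : ℕ → E} (h : IsRatConvexBlock f y) (n₀ : ℕ) :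
    IsRatConvexBlock f (fun k => y (k + n₀)) := by
  obtain ⟨c, hc⟩ := ratBlock_iff.mp h
  refine ratBlock_iff.mpr ⟨fun k => c (k + n₀), fun k => hc.1 _, ?_, fun k => hc.2.2 _⟩
  intro k m hm m' hm'
  change m' ∈ (c (k + 1 + n₀)).support at hm'
  have e : k + 1 + n₀ = k + n₀ + 1 := by omega
  rw [e] at hm'
  exact hc.2.1 (k + n₀) m hm m' hm'

lemma evRatBlock_trans {f g y : ℕ → E} (hfg : EvRatConvexBlock f g)
    (hgy : EvRatConvexBlock g y) : EvRatConvexBlock f y := by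
  classical
  obtain ⟨n₁, h₁⟩ := hfg
  obtain ⟨n₀, h₀⟩ := hgy
  obtain ⟨I, a, hne, hsucc, hpos, hrat, hsum, hval⟩ := h₀
  have hge : ∀ k, ∀ j ∈ I k, k ≤ j :=
    succ_le hne (fun k m hm m' hm' => hsucc k m m' hm hm')
  have hinj : ∀ k : ℕ, ∀ x ∈ I (k + n₁), ∀ z ∈ I (k + n₁), x - n₁ = z - n₁ → x = z := by
    intro k x hx z hz hxz
    have h1 := hge (k + n₁) x hx
    have h2 := hge (k + n₁) z hz
    omega
  have hy : IsRatConvexBlock (fun j => g (j + n₁)) (fun k => y (k + n₁ + n₀)) := by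
    refine ⟨fun k => (I (k + n₁)).image (· - n₁), fun j => a (j + n₁), ?_, ?_, ?_, ?_, ?_, ?_⟩
    · intro k; exact (hne (k + n₁)).image _
    · intro k m mm hm hmm
      rw [Finset.mem_image] at hm hmm
      obtain ⟨j, hj, hjm⟩ := hm
      obtain ⟨j', hj', hjm'⟩ := hmm
      have e : k + 1 + n₁ = k + n₁ + 1 := by omega
      rw [e] at hj'
      have h4 := hsucc (k + n₁) j j' hj hj'
      have h5 := hge (k + n₁) j hj
      have h6 := hge (k + n₁ + 1) j' hj'
      omega
    · intro n; exact hpos _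
    · intro n; exact hrat _
    · intro k
      rw [Finset.sum_image (hinj k), ← hsum (k + n₁)]
      refine Finset.sum_congr rfl fun j hj => ?_
      have := hge (k + n₁) j hj
      congr 1
      omega
    · intro k
      have hv : y (k + n₁ + n₀) = ∑ j ∈ I (k + n₁), a j • g j := hval (k + n₁)
      show y (k + n₁ + n₀) = _
      rw [hv, Finset.sum_image (hinj k)]
      refine Finset.sum_congr rfl fun j hj => ?_
      have := hge (k + n₁) j hj
      have e : j - n₁ + n₁ = j := by omega
      show a j • g j = a (j - n₁ + n₁) • g (j - n₁ + n₁)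
      rw [e]
  have htr := ratBlock_trans h₁ hy
  refine ⟨n₀ + n₁, ?_⟩
  have he : (fun k => y (k + n₁ + n₀)) = (fun k => y (k + (n₀ + n₁))) := by
    funext k; congr 1; omega
  rwa [he] at htr

lemma blkVal_inj {f : ℕ → E} (hf : LinearIndependent ℝ f) {c c' : ℕ →₀ ℚ}
    (h : blkVal f c = blkVal f c') : c = c' := by
  have hval : ∀ d : ℕ →₀ ℚ, Finsupp.linearCombination ℝ f (d.mapRange (Rat.cast) (by norm_num))
      = blkVal f d := by
    intro d
    rw [Finsupp.linearCombination_apply, Finsupp.sum_mapRange_index (by intro a; rw [zero_smul])]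
    rfl
  have hmr := Finsupp.mapRange_sub (f := (Rat.cast : ℚ → ℝ)) (hf := by norm_num)
    (by intro x y; push_cast; ring) c c'
  have h0 : Finsupp.linearCombination ℝ f ((c - c').mapRange (Rat.cast) (by norm_num)) = 0 := by
    rw [hmr, map_sub, hval, hval, h, sub_self]
  have := linearIndependent_iff.mp hf _ h0
  have hz : ∀ n, ((c - c') n : ℝ) = 0 := by
    intro n
    have := DFunLike.congr_fun this n
    simpa [Finsupp.mapRange_apply] using this
  have : c - c' = 0 := by
    ext n
    have := hz n
    exact_mod_cast this
  exact sub_eq_zero.mp this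

end Aux2

section Card

lemma countable_pseudo (M : Set (Set ℕ)) (hM : M.Countable)
    (hfip : ∀ F : Finset (Set ℕ), ↑F ⊆ M → Set.Infinite (⋂ A ∈ F, A)) :
    ∃ A : Set ℕ, A.Infinite ∧ ∀ B ∈ M, (A \ B).Finite := by
  classical
  rcases M.eq_empty_or_nonempty with h | h
  · exact ⟨Set.univ, Set.infinite_univ, by rw [h]; simp⟩
  obtain ⟨B, hB⟩ := hM.exists_eq_range h
  have key : ∀ (n bound : ℕ), ∃ x, bound < x ∧ ∀ k ≤ n, x ∈ B k := by
    intro n bound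
    have hsub : ↑((Finset.range (n + 1)).image B) ⊆ M := by
      intro A hA
      simp only [Finset.coe_image, Set.mem_image] at hA
      obtain ⟨k, _, rfl⟩ := hA
      rw [hB]; exact Set.mem_range_self k
    have hinf := hfip _ hsub
    obtain ⟨x, hx, hgt⟩ := hinf.exists_gt bound
    refine ⟨x, hgt, ?_⟩
    intro k hk
    have : B k ∈ (Finset.range (n + 1)).image B :=
      Finset.mem_image.mpr ⟨k, Finset.mem_range.mpr (by omega), rfl⟩
    simp only [Set.mem_iInter] at hx
    exact hx (B k) this
  set a : ℕ → ℕ := fun n => Nat.rec (Classical.choose (key 0 0))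
    (fun n ih => Classical.choose (key (n + 1) ih)) n with hadef
  have ha0 : ∀ k ≤ 0, a 0 ∈ B k := (Classical.choose_spec (key 0 0)).2
  have hastep : ∀ n, a n < a (n + 1) ∧ ∀ k ≤ n + 1, a (n + 1) ∈ B k := by
    intro n
    exact ⟨(Classical.choose_spec (key (n + 1) (a n))).1,
      (Classical.choose_spec (key (n + 1) (a n))).2⟩
  have hmem : ∀ n, ∀ k ≤ n, a n ∈ B k := by
    intro n
    cases n with
    | zero => exact ha0
    | succ m => exact (hastep m).2
  have hsm : StrictMono a := strictMono_nat_of_lt_succ (fun n => (hastep n).1)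
  refine ⟨Set.range a, Set.infinite_range_of_injective hsm.injective, ?_⟩
  intro C hC
  rw [hB] at hC
  obtain ⟨j, rfl⟩ := hC
  have hsub : Set.range a \ B j ⊆ ↑((Finset.range j).image a) := by
    rintro x ⟨⟨n, rfl⟩, hnB⟩
    simp only [Finset.coe_image, Set.mem_image, Finset.mem_coe, Finset.mem_range]
    refine ⟨n, ?_, rfl⟩
    by_contra hn
    exact hnB (hmem n j (by omega))
  exact ((Finset.range j).image a).finite_toSet.subset hsub

lemma pseudo_of_lt {κ : Cardinal} (hκ : κ < pseudoIntersectionNumber)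
    (M : Set (Set ℕ))
    (hfip : ∀ F : Finset (Set ℕ), ↑F ⊆ M → Set.Infinite (⋂ A ∈ F, A))
    (hsize : Cardinal.mk M ≤ max κ Cardinal.aleph0) :
    ∃ A : Set ℕ, A.Infinite ∧ ∀ B ∈ M, (A \ B).Finite := by
  by_contra hno
  have hAinf : ∀ A ∈ M, A.Infinite := by
    intro A hA
    have := hfip {A} (by simpa using hA)
    simpa using this
  have hmem : Cardinal.mk M ∈ { c : Cardinal | ∃ M : Set (Set ℕ),
      (∀ A ∈ M, A.Infinite) ∧
      (∀ F : Finset (Set ℕ), ↑F ⊆ M → Set.Infinite (⋂ A ∈ F, A)) ∧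
      (¬ ∃ A : Set ℕ, A.Infinite ∧ ∀ B ∈ M, (A \ B).Finite) ∧
      Cardinal.mk M = c } := ⟨M, hAinf, hfip, hno, rfl⟩
  have hle : pseudoIntersectionNumber ≤ Cardinal.mk M := csInf_le' hmem
  have h1 : κ < Cardinal.mk M := lt_of_lt_of_le hκ hle
  have h2 : Cardinal.aleph0 < Cardinal.mk M := by
    by_contra hc
    push_neg at hc
    have : Countable M := Cardinal.mk_le_aleph0_iff.mp hc
    exact hno (countable_pseudo M (Set.countable_coe_iff.mp this) hfip)
  have : max κ Cardinal.aleph0 < Cardinal.mk M := max_lt h1 h2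
  exact absurd hsize (not_le.mpr this)

end Card

section Key
variable {E : Type*} [AddCommGroup E] [Module ℝ E]

/-- the set of positive rational convex combinations of the blocks `cg`. -/
def ComboOf (cg : ℕ → (ℕ →₀ ℚ)) : Set (ℕ →₀ ℚ) :=
  {d | ∃ (K : Finset ℕ) (b : ℕ → ℚ), (∀ j ∈ K, 0 < b j) ∧ (∑ j ∈ K, b j = 1) ∧
    d = ∑ j ∈ K, b j • cg j}

/-- blocks whose support lies beyond `m`. -/
def EscSet (m : ℕ) : Set (ℕ →₀ ℚ) :=
  {d | IsBlk d ∧ ∀ n ∈ d.support, m < n}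

lemma BlkSeq.inj {f : ℕ → E} {c y} (h : BlkSeq f c y) : Function.Injective c := by
  intro k k' he
  by_contra hne
  obtain ⟨n, hn⟩ := (h.1 k).nonempty
  rcases lt_or_gt_of_ne hne with hlt | hlt
  · have hn' : n ∈ (c k').support := by rw [← he]; exact hn
    exact absurd (h.mono hlt n hn n hn') (lt_irrefl n)
  · have hn' : n ∈ (c k').support := by rw [← he]; exact hn
    exact absurd (h.mono hlt n hn' n hn) (lt_irrefl n)

lemma block_to_combo {f : ℕ → E} (hf : LinearIndependent ℝ f) {cg : ℕ → (ℕ →₀ ℚ)}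
    {gi : ℕ → E} (hcg : BlkSeq f cg gi) {d : ℕ → (ℕ →₀ ℚ)} {h : ℕ → E}
    (hd : BlkSeq f d h) {n₀ : ℕ}
    (hblk : IsRatConvexBlock gi (fun k => h (k + n₀))) :
    ∀ k, d (k + n₀) ∈ ComboOf cg := by
  classical
  obtain ⟨I, a, hne, hsucc, hpos, hrat, hsum, hval⟩ := hblk
  choose qa hqa using hrat
  intro k
  have hqa0 : ∀ j, 0 ≤ qa j := by
    intro j
    have := hpos j
    rw [hqa j] at this
    exact_mod_cast this
  have heq : d (k + n₀) = ∑ j ∈ I k, qa j • cg j := by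
    refine blkVal_inj hf ?_
    rw [blkVal_combo]
    have h1 : blkVal f (d (k + n₀)) = h (k + n₀) := (hd.2.2 _).symm
    have h2 : h (k + n₀) = ∑ j ∈ I k, a j • gi j := hval k
    rw [h1, h2]
    refine Finset.sum_congr rfl fun j _ => ?_
    rw [hqa j, hcg.2.2 j]
  refine ⟨(I k).filter (fun j => 0 < qa j), qa, fun j hj => (Finset.mem_filter.mp hj).2, ?_, ?_⟩
  · have hzero : ∀ j ∈ I k, j ∉ (I k).filter (fun j => 0 < qa j) → qa j = 0 := by
      intro j hj hnj
      rw [Finset.mem_filter] at hnj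
      push_neg at hnj
      exact le_antisymm (hnj hj) (hqa0 j)
    rw [Finset.sum_subset (Finset.filter_subset _ _) hzero]
    have : ((∑ j ∈ I k, qa j : ℚ) : ℝ) = 1 := by
      push_cast
      rw [← hsum k]
      exact Finset.sum_congr rfl fun j _ => (hqa j).symm
    exact_mod_cast this
  · rw [heq]
    refine (Finset.sum_subset (Finset.filter_subset _ _) ?_).symm
    intro j hj hnj
    rw [Finset.mem_filter] at hnj
    push_neg at hnj
    have h1 := hnj hj
    have h2 := hqa0 j
    have : qa j = 0 := le_antisymm h1 h2
    rw [this, zero_smul]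

lemma combo_to_block {f : ℕ → E} {cg : ℕ → (ℕ →₀ ℚ)} {gi : ℕ → E} (hcg : BlkSeq f cg gi)
    {d : ℕ → (ℕ →₀ ℚ)} {h : ℕ → E} (hd : BlkSeq f d h) (n₀ : ℕ)
    (hmem : ∀ k, d (k + n₀) ∈ ComboOf cg) :
    IsRatConvexBlock gi (fun k => h (k + n₀)) := by
  classical
  choose K b hbpos hbsum hbeq using hmem
  have hKne : ∀ k, (K k).Nonempty := by
    intro k
    rw [Finset.nonempty_iff_ne_empty]
    intro hemp
    have := hbsum k
    rw [hemp] at this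
    simp at this
  have hcsub : ∀ k, ∀ j ∈ K k, (cg j).support ⊆ (d (k + n₀)).support := by
    intro k j hj
    rw [hbeq k]
    exact combo_support_supset (fun j' hj' => le_of_lt (hbpos k j' hj'))
      (fun j' _ => hcg.1 j') hj (hbpos k j hj)
  have hKsucc : ∀ k, ∀ j ∈ K k, ∀ j' ∈ K (k + 1), j < j' := by
    intro k j hj j' hj'
    obtain ⟨n, hn⟩ := (hcg.1 j).nonempty
    obtain ⟨n', hn'⟩ := (hcg.1 j').nonempty
    have hnd : n ∈ (d (k + n₀)).support := hcsub k j hj hn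
    have hnd' : n' ∈ (d (k + 1 + n₀)).support := hcsub (k + 1) j' hj' hn'
    have hlt : n < n' := hd.mono (by omega) n hnd n' hnd'
    rcases lt_trichotomy j j' with hc | hc | hc
    · exact hc
    · exfalso
      subst hc
      have : n' ∈ (d (k + n₀)).support := hcsub k j hj hn'
      exact absurd (hd.mono (show k + n₀ < k + 1 + n₀ by omega) n' this n' hnd')
        (lt_irrefl n')
    · exact absurd (hcg.mono hc n' hn' n hn) (by omega)
  have hKmono : ∀ {k k' : ℕ}, k < k' → ∀ m ∈ K k, ∀ m' ∈ K k', m < m' :=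
    succ_mono hKne hKsucc
  set a : ℕ → ℝ := fun j => if hx : ∃ k, j ∈ K k then ((b hx.choose j : ℚ) : ℝ) else 0
    with ha
  have haux : ∀ k j, j ∈ K k → a j = ((b k j : ℚ) : ℝ) := by
    intro k j hj
    have hex : ∃ k, j ∈ K k := ⟨k, hj⟩
    rw [ha]
    simp only [dif_pos hex]
    rcases lt_trichotomy hex.choose k with hc | hc | hc
    · exact absurd (hKmono hc j hex.choose_spec j hj) (lt_irrefl j)
    · rw [hc]
    · exact absurd (hKmono hc j hj j hex.choose_spec) (lt_irrefl j)
  have ha0 : ∀ j, (¬ ∃ k, j ∈ K k) → a j = 0 := by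
    intro j hj
    rw [ha]
    exact dif_neg hj
  refine ⟨K, a, hKne, fun k m mm hm hmm => hKsucc k m hm mm hmm, ?_, ?_, ?_, ?_⟩
  · intro j
    by_cases hx : ∃ k, j ∈ K k
    · rw [haux hx.choose j hx.choose_spec]
      have := hbpos hx.choose j hx.choose_spec
      positivity
    · rw [ha0 j hx]
  · intro j
    by_cases hx : ∃ k, j ∈ K k
    · exact ⟨b hx.choose j, haux hx.choose j hx.choose_spec⟩
    · exact ⟨0, by rw [ha0 j hx]; norm_num⟩
  · intro k
    rw [Finset.sum_congr rfl (fun j hj => haux k j hj)]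
    have : ((∑ j ∈ K k, b k j : ℚ) : ℝ) = 1 := by rw [hbsum k]; norm_num
    rw [← this]
    push_cast
    rfl
  · intro k
    show h (k + n₀) = _
    rw [hd.2.2 (k + n₀), hbeq k, blkVal_combo]
    refine Finset.sum_congr rfl fun j hj => ?_
    rw [haux k j hj, hcg.2.2 j]

end Key

section KeyMain
variable {E : Type*} [AddCommGroup E] [Module ℝ E]

lemma key_lemma {ι : Type} (hκ : Cardinal.mk ι < pseudoIntersectionNumber)
    {f : ℕ → E} (hf : LinearIndependent ℝ f) {J : Type} (hJ : Cardinal.mk J ≤ Cardinal.mk ι)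
    (g : J → ℕ → E) (hg : ∀ i, IsRatConvexBlock f (g i))
    (hdir : ∀ T : Finset J, ∃ h', IsRatConvexBlock f h' ∧ ∀ i ∈ T, EvRatConvexBlock (g i) h') :
    ∃ h, IsRatConvexBlock f h ∧ ∀ i, EvRatConvexBlock (g i) h := by
  classical
  choose cg hcg using fun i => ratBlock_iff.mp (hg i)
  obtain ⟨enc, henc⟩ := exists_injective_nat (ℕ →₀ ℚ)
  set Fam : J ⊕ ℕ → Set ℕ :=
    Sum.elim (fun i => enc '' ComboOf (cg i)) (fun m => enc '' EscSet m) with hFam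
  set M : Set (Set ℕ) := Set.range Fam with hM
  -- size estimate
  have hsize : Cardinal.mk M ≤ max (Cardinal.mk ι) Cardinal.aleph0 := by
    refine le_trans (Cardinal.mk_range_le) ?_
    rw [Cardinal.mk_sum, Cardinal.lift_id, Cardinal.lift_id, Cardinal.mk_nat]
    exact Cardinal.add_le_of_le (le_max_right _ _)
      (le_trans hJ (le_max_left _ _)) (le_max_right _ _)
  -- finite intersection property
  have hfip : ∀ F : Finset (Set ℕ), ↑F ⊆ M → Set.Infinite (⋂ A ∈ F, A) := by
    intro F hF
    have hidx : ∀ A ∈ F, ∃ x : J ⊕ ℕ, Fam x = A := fun A hA => hF hA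
    choose idx hidx' using hidx
    set T : Finset (J ⊕ ℕ) := F.attach.image (fun A => idx A.1 A.2) with hT
    set TJ : Finset J := T.biUnion (Sum.elim (fun i => {i}) (fun _ => (∅ : Finset J)))
      with hTJ
    set mmax : ℕ := T.sup (Sum.elim (fun _ => 0) id) with hmmax
    obtain ⟨h', hh'f, hh'T⟩ := hdir TJ
    obtain ⟨d', hd'⟩ := ratBlock_iff.mp hh'f
    have hev : ∀ i ∈ TJ, ∃ n₀, ∀ k, k ≥ n₀ → d' k ∈ ComboOf (cg i) := by
      intro i hi
      obtain ⟨n₀, hn₀⟩ := hh'T i hi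
      have := block_to_combo hf (hcg i) hd' hn₀
      refine ⟨n₀, fun k hk => ?_⟩
      have := this (k - n₀)
      rwa [Nat.sub_add_cancel hk] at this
    set N : ℕ := max (mmax + 1) (TJ.attach.sup fun i => (hev i.1 i.2).choose) with hN
    have hmemC : ∀ i ∈ TJ, ∀ k, N ≤ k → d' k ∈ ComboOf (cg i) := by
      intro i hi k hk
      refine (hev i hi).choose_spec k ?_
      have h5 : (fun (i : {x // x ∈ TJ}) => (hev i.1 i.2).choose) ⟨i, hi⟩ ≤
          TJ.attach.sup fun i => (hev i.1 i.2).choose :=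
        Finset.le_sup (f := fun (i : {x // x ∈ TJ}) => (hev i.1 i.2).choose)
          (Finset.mem_attach TJ ⟨i, hi⟩)
      simp only at h5
      omega
    have hmemE : ∀ m k : ℕ, m < k → d' k ∈ EscSet m := by
      intro m k hk
      refine ⟨hd'.1 k, fun n hn => ?_⟩
      have := hd'.le_of_mem k n hn
      omega
    refine Set.infinite_of_injective_forall_mem
      (f := fun k : ℕ => enc (d' (k + N))) ?_ ?_
    · intro k k' he
      have := henc he
      have := hd'.inj this
      omega
    · intro k
      rw [Set.mem_iInter₂]
      intro A hA
      rw [← hidx' A hA]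
      have hxT : idx A hA ∈ T := Finset.mem_image.mpr ⟨⟨A, hA⟩, Finset.mem_attach _ _, rfl⟩
      cases hx : idx A hA with
      | inl i =>
        have hiTJ : i ∈ TJ := by
          refine Finset.mem_biUnion.mpr ⟨idx A hA, hxT, ?_⟩
          rw [hx]
          simp
        show enc (d' (k + N)) ∈ Fam (Sum.inl i)
        exact Set.mem_image_of_mem enc (hmemC i hiTJ (k + N) (by omega))
      | inr m =>
        have hm : m ≤ mmax := by
          have h5 := Finset.le_sup (f := Sum.elim (fun _ => (0 : ℕ)) id) hxT
          rw [hx] at h5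
          simpa using h5
        show enc (d' (k + N)) ∈ Fam (Sum.inr m)
        refine Set.mem_image_of_mem enc (hmemE m (k + N) ?_)
        have : mmax + 1 ≤ N := le_max_left _ _
        omega
  -- apply the pseudo-intersection property
  obtain ⟨A, hAinf, hAps⟩ := pseudo_of_lt hκ M hfip hsize
  -- extraction of a block sequence
  have hstep : ∀ m : ℕ, ∃ x : ℕ →₀ ℚ, enc x ∈ A ∧ x ∈ EscSet m := by
    intro m
    have hfin : (A \ (enc '' EscSet m)).Finite := hAps (Fam (Sum.inr m)) ⟨Sum.inr m, rfl⟩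
    have hinf : (A \ (A \ (enc '' EscSet m))).Infinite := hAinf.diff hfin
    obtain ⟨y, hy⟩ := hinf.nonempty
    have hyA : y ∈ A := hy.1
    have hyE : y ∈ enc '' EscSet m := by
      by_contra hc
      exact hy.2 ⟨hyA, hc⟩
    obtain ⟨x, hx, rfl⟩ := hyE
    exact ⟨x, hyA, hx⟩
  set d : ℕ → (ℕ →₀ ℚ) := fun k => Nat.rec (Classical.choose (hstep 0))
    (fun _ ih => Classical.choose (hstep (ih.support.sup id))) k with hd
  have hd0 : enc (d 0) ∈ A ∧ d 0 ∈ EscSet 0 := Classical.choose_spec (hstep 0)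
  have hdsucc : ∀ k, enc (d (k + 1)) ∈ A ∧ d (k + 1) ∈ EscSet ((d k).support.sup id) :=
    fun k => Classical.choose_spec (hstep ((d k).support.sup id))
  have hdA : ∀ k, enc (d k) ∈ A := by
    intro k
    cases k with
    | zero => exact hd0.1
    | succ m => exact (hdsucc m).1
  have hdblk : ∀ k, IsBlk (d k) := by
    intro k
    cases k with
    | zero => exact hd0.2.1
    | succ m => exact (hdsucc m).2.1
  have hdsuc : ∀ k, ∀ m ∈ (d k).support, ∀ m' ∈ (d (k + 1)).support, m < m' := by
    intro k m hm m' hm'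
    have h1 : m ≤ (d k).support.sup id := Finset.le_sup (f := id) hm
    have h2 := (hdsucc k).2.2 m' hm'
    omega
  set h : ℕ → E := fun k => blkVal f (d k) with hh
  have hdseq : BlkSeq f d h := ⟨hdblk, hdsuc, fun _ => rfl⟩
  refine ⟨h, ratBlock_iff.mpr ⟨d, hdseq⟩, ?_⟩
  intro i
  have hfin : (A \ (enc '' ComboOf (cg i))).Finite := hAps (Fam (Sum.inl i)) ⟨Sum.inl i, rfl⟩
  set Bad : Set ℕ := {k | d k ∉ ComboOf (cg i)} with hBad
  have hBadfin : Bad.Finite := by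
    by_contra hc
    haveI : Infinite ↥Bad := Set.infinite_coe_iff.mpr hc
    have : (A \ (enc '' ComboOf (cg i))).Infinite := by
      refine Set.infinite_of_injective_forall_mem (f := fun k : ↥Bad => enc (d k.1)) ?_ ?_
      · intro k k' he
        exact Subtype.ext (hdseq.inj (henc he))
      · rintro ⟨k, hk⟩
        refine ⟨hdA k, ?_⟩
        intro hmem
        obtain ⟨x, hx, hxe⟩ := hmem
        have hxd : x = d k := henc hxe
        rw [hxd] at hx
        exact hk hx
    exact this hfin
  obtain ⟨n₀, hn₀⟩ : ∃ n₀, ∀ k, n₀ ≤ k → d k ∈ ComboOf (cg i) := by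
    obtain ⟨bd, hbd⟩ := hBadfin.bddAbove
    refine ⟨bd + 1, fun k hk => ?_⟩
    by_contra hc
    have := hbd (show k ∈ Bad from hc)
    omega
  exact ⟨n₀, combo_to_block (hcg i) hdseq n₀ (fun k => hn₀ (k + n₀) (by omega))⟩

end KeyMain

section Main

lemma finset_max_rel {α : Type*} {r : α → α → Prop}
    (htri : ∀ a b, r a b ∨ a = b ∨ r b a)
    (htrans : ∀ {a b c}, r a b → r b c → r a c)
    (T : Finset α) : T.Nonempty → ∃ m ∈ T, ∀ x ∈ T, x = m ∨ r x m := by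
  classical
  induction T using Finset.induction_on with
  | empty => intro h; simp at h
  | @insert a s ha ih =>
    intro _
    rcases s.eq_empty_or_nonempty with hs | hs
    · subst hs
      refine ⟨a, Finset.mem_insert_self a _, ?_⟩
      intro x hx
      simp only [Finset.mem_insert, Finset.notMem_empty, or_false] at hx
      exact Or.inl hx
    · obtain ⟨m, hmT, hmax⟩ := ih hs
      rcases htri a m with hc | hc | hc
      · refine ⟨m, Finset.mem_insert_of_mem hmT, ?_⟩
        intro x hx
        rcases Finset.mem_insert.mp hx with rfl | hxs
        · exact Or.inr hc
        · exact hmax x hxs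
      · refine ⟨m, Finset.mem_insert_of_mem hmT, ?_⟩
        intro x hx
        rcases Finset.mem_insert.mp hx with rfl | hxs
        · exact Or.inl hc
        · exact hmax x hxs
      · refine ⟨a, Finset.mem_insert_self a s, ?_⟩
        intro x hx
        rcases Finset.mem_insert.mp hx with rfl | hxs
        · exact Or.inl rfl
        · rcases hmax x hxs with rfl | hxr
          · exact Or.inr hc
          · exact Or.inr (htrans hxr hc)

theorem diagonal_rational_convex_blocks {E : Type*} [AddCommGroup E] [Module ℝ E]
    {ι : Type} (hκ : Cardinal.mk ι < pseudoIntersectionNumber)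
    (S : Set (ℕ → E)) (hS : ∀ f ∈ S, LinearIndependent ℝ f)
    (Sa : ι → Set (ℕ → E)) (hsub : ∀ α, Sa α ⊆ S)
    (h1 : ∀ (α : ι) (g h : ℕ → E), g ∈ Sa α → EvRatConvexBlock g h → h ∈ Sa α)
    (h2 : ∀ (α : ι), ∀ f ∈ S, ∃ g, IsRatConvexBlock f g ∧ g ∈ Sa α) :
    ∀ f ∈ S, ∃ g, IsRatConvexBlock f g ∧ ∀ α, g ∈ Sa α := by
  classical
  intro f hf
  set r : ι → ι → Prop := WellOrderingRel with hr
  haveI hwo : IsWellOrder ι r := WellOrderingRel.isWellOrder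
  have hwf : WellFounded r := IsWellFounded.wf
  have htri : ∀ a b : ι, r a b ∨ a = b ∨ r b a := fun a b => trichotomous a b
  have htrans : ∀ {a b c : ι}, r a b → r b c → r a c := fun hab hbc => _root_.trans hab hbc
  set step : (α : ι) → ((γ : ι) → r γ α → (ℕ → E)) → (ℕ → E) := fun α rec =>
    if h : ∃ x, x ∈ Sa α ∧ IsRatConvexBlock f x ∧
        ∀ γ (hγ : r γ α), EvRatConvexBlock (rec γ hγ) x
    then h.choose else f with hstepdef
  set F : ι → (ℕ → E) := hwf.fix step with hFdef
  have hFeq : ∀ β, F β = if h : ∃ x, x ∈ Sa β ∧ IsRatConvexBlock f x ∧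
      ∀ γ (_ : r γ β), EvRatConvexBlock (F γ) x then h.choose else f := by
    intro β
    have h0 := hwf.fix_eq step β
    exact h0
  have hInv : ∀ β : ι, F β ∈ Sa β ∧ IsRatConvexBlock f (F β) ∧
      ∀ γ, r γ β → EvRatConvexBlock (F γ) (F β) := by
    intro β
    induction β using WellFounded.induction hwf with
    | _ β IH =>
    have hEx : ∃ x, x ∈ Sa β ∧ IsRatConvexBlock f x ∧
        ∀ γ (_ : r γ β), EvRatConvexBlock (F γ) x := by
      by_cases hne : ∃ γ, r γ β
      · have hJ : Cardinal.mk {γ // r γ β} ≤ Cardinal.mk ι := Cardinal.mk_subtype_le _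
        have hg : ∀ i : {γ // r γ β}, IsRatConvexBlock f (F i.1) :=
          fun i => (IH i.1 i.2).2.1
        have hdir : ∀ T : Finset {γ // r γ β}, ∃ h', IsRatConvexBlock f h' ∧
            ∀ i ∈ T, EvRatConvexBlock (F i.1) h' := by
          intro T
          rcases T.eq_empty_or_nonempty with hT | hT
          · exact ⟨f, ratBlock_refl f, by rw [hT]; simp⟩
          · obtain ⟨m, hmT, hmax⟩ := finset_max_rel
              (r := fun a b : {γ // r γ β} => r a.1 b.1)
              (fun a b => by
                rcases htri a.1 b.1 with hc | hc | hc
                · exact Or.inl hc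
                · exact Or.inr (Or.inl (Subtype.ext hc))
                · exact Or.inr (Or.inr hc))
              (fun hab hbc => htrans hab hbc) T hT
            refine ⟨F m.1, (IH m.1 m.2).2.1, ?_⟩
            intro i hi
            rcases hmax i hi with rfl | hc
            · exact evRatBlock_refl (F i.1)
            · exact (IH m.1 m.2).2.2 i.1 hc
        obtain ⟨h, hhf, hhall⟩ := key_lemma hκ (hS f hf) hJ
          (fun i : {γ // r γ β} => F i.1) hg hdir
        obtain ⟨γ₀, hγ₀⟩ := hne
        have hhS : h ∈ S := hsub γ₀ (h1 γ₀ (F γ₀) h (IH γ₀ hγ₀).1 (hhall ⟨γ₀, hγ₀⟩))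
        obtain ⟨x, hxblk, hxSa⟩ := h2 β h hhS
        refine ⟨x, hxSa, ratBlock_trans hhf hxblk, ?_⟩
        intro γ hγ
        exact evRatBlock_trans (hhall ⟨γ, hγ⟩) (evRatBlock_of_ratBlock hxblk)
      · obtain ⟨x, hxblk, hxSa⟩ := h2 β f hf
        exact ⟨x, hxSa, hxblk, fun γ hγ => absurd ⟨γ, hγ⟩ hne⟩
    rw [hFeq β, dif_pos hEx]
    exact hEx.choose_spec
  have hgall : ∀ α : ι, IsRatConvexBlock f (F α) := fun α => (hInv α).2.1
  have hdir : ∀ T : Finset ι, ∃ h', IsRatConvexBlock f h' ∧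
      ∀ i ∈ T, EvRatConvexBlock (F i) h' := by
    intro T
    rcases T.eq_empty_or_nonempty with hT | hT
    · exact ⟨f, ratBlock_refl f, by rw [hT]; simp⟩
    · obtain ⟨m, hmT, hmax⟩ := finset_max_rel htri (fun hab hbc => htrans hab hbc) T hT
      refine ⟨F m, (hInv m).2.1, ?_⟩
      intro i hi
      rcases hmax i hi with rfl | hc
      · exact evRatBlock_refl (F i)
      · exact (hInv m).2.2 i hc
  obtain ⟨h, hhf, hhall⟩ := key_lemma hκ (hS f hf) (le_refl (Cardinal.mk ι)) F hgall hdir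
  exact ⟨h, hhf, fun α => h1 α (F α) h (hInv α).1 (hhall α)⟩

end Main
end
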